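/- arXiv:2405.08608 — 2 statements merged into one kernel-verified Lean document; each statement's English description precedes it below -/
import Mathlib

section
/- Let ε > 0, τ > 0, and 0 < γ < τ satisfy ε ≤ 1/2 − τ + γ, and set α = 1/2 − τ + γ (note 0 < α < 1/2) and β = min(γ, 0.05·ε²). There exists p₀ such that for every prime p ≥ p₀ with p ≡ 1 (mod 4) the following holds: if the Paley ETF Φ_p has the (p^{1/2+ε}, p^{−τ})-RIP, then for any two independent sources X and Y on F_p, each with min-entropy at least α·n where n = ⌈log₂ p⌉, one has |Pr[Ext_p(X,Y) = 1] − 1/2| ≤ 2·p^{−β} + p^{−α}/2. -/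
open scoped Classical
open Finset

noncomputable section

/-- The quadratic character `χ` of `F_p`: `χ 0 = 0`, `χ x = 1` if `x` is a nonzero square,
and `χ x = -1` otherwise. -/
def quadChar (p : ℕ) (x : ZMod p) : ℤ :=
  if x = 0 then 0 else if IsSquare x then 1 else -1

/-- The canonical additive character `ψ` of `F_p`, `ψ x = exp(2πi·x/p)`. -/
def addChar' (p : ℕ) (x : ZMod p) : ℂ :=
  Complex.exp (2 * Real.pi * Complex.I * (x.val : ℂ) / (p : ℂ))

/-- The set of quadratic residues mod `p` (nonzero squares), as a type. -/
abbrev QRes (p : ℕ) : Type := {b : ZMod p // b ≠ 0 ∧ IsSquare b}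

/-- The Paley ETF: rows indexed by `{0} ∪ Q_p` (with `none` the `0`-row),
columns indexed by `F_p ∪ {∞}` (with `none` the `∞`-column). -/
def PaleyETF (p : ℕ) : Matrix (Option (QRes p)) (Option (ZMod p)) ℂ :=
  fun r c =>
    match r, c with
    | none, none => 1
    | none, some _ => ((1 / Real.sqrt p : ℝ) : ℂ)
    | some _, none => 0
    | some b, some a => ((Real.sqrt (2 / p) : ℝ) : ℂ) * addChar' p (b.1 * a)

/-- `(K, δ)`-restricted isometry property for a complex matrix: for every vector `x`
with at most `K` nonzero entries, `(1-δ)‖x‖² ≤ ‖Φx‖² ≤ (1+δ)‖x‖²`. -/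
def HasRIP {M N : Type*} [Fintype M] [Fintype N] (Φ : Matrix M N ℂ) (K δ : ℝ) : Prop :=
  ∀ x : N → ℂ, ((Finset.univ.filter fun n => x n ≠ 0).card : ℝ) ≤ K →
    (1 - δ) * ∑ n, ‖x n‖ ^ 2 ≤ ∑ m, ‖∑ n, Φ m n * x n‖ ^ 2 ∧
      ∑ m, ‖∑ n, Φ m n * x n‖ ^ 2 ≤ (1 + δ) * ∑ n, ‖x n‖ ^ 2

/-- The Paley graph extractor: `Ext_p(x,y) = 1` if `x = y`, and `(χ(x−y)+1)/2` otherwise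
(which is `1` iff `x − y` is a nonzero square, `0` otherwise). -/
def paleyExt (p : ℕ) (x y : ZMod p) : ℕ :=
  if x = y then 1 else if IsSquare (x - y) then 1 else 0

/-- Indicator vector of `U ⊆ F_p` with respect to the column indexing of the Paley ETF
(entry `0` in the `∞` coordinate). -/
def indic (p : ℕ) (U : Finset (ZMod p)) : Option (ZMod p) → ℂ :=
  fun c => match c with
  | none => 0
  | some a => if a ∈ U then 1 else 0

set_option maxHeartbeats 1000000

namespace PaleyAux
set_option linter.unusedSectionVars false
variable {p : ℕ} [Fact p.Prime]
def zt (p : ℕ) : ℂ := Complex.exp (2 * Real.pi * Complex.I / (p : ℂ))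
lemma p_pos : 0 < p := (Fact.out : p.Prime).pos
lemma p_ne_zero : (p:ℂ) ≠ 0 := by exact_mod_cast (Fact.out : p.Prime).pos.ne'
lemma e_eq (x : ZMod p) : addChar' p x = zt p ^ x.val := by
  rw [zt, ← Complex.exp_nat_mul, addChar']; ring_nf
lemma zt_pow_p : zt p ^ p = 1 := by
  rw [zt, ← Complex.exp_nat_mul,
    show (p:ℂ) * (2 * Real.pi * Complex.I / (p : ℂ)) = 2 * Real.pi * Complex.I by
      rw [mul_comm, div_mul_cancel₀ _ p_ne_zero]]
  exact Complex.exp_two_pi_mul_I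

-- new material
lemma e_add (a b : ZMod p) : addChar' p (a + b) = addChar' p a * addChar' p b := by
  haveI : NeZero p := ⟨p_pos.ne'⟩
  rw [e_eq, e_eq, e_eq, ← pow_add]
  have h : a.val + b.val = (a + b).val + p * ((a.val + b.val) / p) := by
    rw [ZMod.val_add]; exact (Nat.mod_add_div _ _).symm
  rw [h, pow_add, pow_mul, zt_pow_p, one_pow, mul_one]

lemma e_zero : addChar' p (0 : ZMod p) = 1 := by
  rw [e_eq]; haveI : NeZero p := ⟨p_pos.ne'⟩; simp [ZMod.val_zero]

lemma e_norm (a : ZMod p) : ‖addChar' p a‖ = 1 := by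
  rw [show addChar' p a = Complex.exp ((2 * Real.pi * a.val / p : ℝ) * Complex.I) by
    rw [addChar']; push_cast; ring_nf]
  exact Complex.norm_exp_ofReal_mul_I _

lemma e_conj (a : ZMod p) : (starRingEnd ℂ) (addChar' p a) = addChar' p (-a) := by
  have h1 : addChar' p a * addChar' p (-a) = 1 := by
    rw [← e_add]; simp [e_zero]
  have h2 : (starRingEnd ℂ) (addChar' p a) = (addChar' p a)⁻¹ :=
    (Complex.inv_eq_conj (e_norm a)).symm
  rw [h2]
  field_simp [eq_inv_of_mul_eq_one_right h1]
  rw [one_div, eq_inv_of_mul_eq_one_right h1]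

lemma zt_ne_one : zt p ≠ 1 := by
  intro h
  rw [zt, Complex.exp_eq_one_iff] at h
  obtain ⟨n, hn⟩ := h
  rw [div_eq_iff p_ne_zero] at hn
  have hpin : (2 * (Real.pi:ℂ) * Complex.I) ≠ 0 := by
    simp [Real.pi_ne_zero, Complex.I_ne_zero]
  have h1 : (1:ℂ) = (n:ℂ) * p := by
    refine mul_left_cancel₀ hpin ?_
    rw [mul_one]
    conv_lhs => rw [hn]
    ring
  have h2 : (1:ℤ) = n * p := by exact_mod_cast h1
  have hd : (p:ℤ) ∣ 1 := ⟨n, by linarith [mul_comm n (p:ℤ)]⟩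
  have := Int.le_of_dvd one_pos hd
  have h2le := (Fact.out : p.Prime).two_le
  omega


lemma sum_e_zero : ∑ a : ZMod p, addChar' p a = 0 := by
  have : ∑ a : ZMod p, addChar' p a = ∑ j ∈ Finset.range p, zt p ^ j := by
    rw [Finset.sum_nbij' (i := fun (a : ZMod p) => a.val) (j := fun j => (j : ZMod p))]
    · intro a _; exact Finset.mem_range.mpr (ZMod.val_lt a)
    · intro j _; exact Finset.mem_univ _
    · intro a _; exact ZMod.natCast_rightInverse a
    · intro j hj; exact ZMod.val_cast_of_lt (Finset.mem_range.mp hj)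
    · intro a _; exact e_eq a
  rw [this, geom_sum_eq zt_ne_one, zt_pow_p]
  simp



lemma sum_e (c : ZMod p) : ∑ a : ZMod p, addChar' p (c * a) = if c = 0 then (p:ℂ) else 0 := by
  split_ifs with hc
  · simp [hc, e_zero]
  · exact (Equiv.sum_comp (Equiv.mulLeft₀ c hc) (fun a => addChar' p a)).trans sum_e_zero

-- quadratic character bridge
lemma quadChar_eq (x : ZMod p) : quadChar p x = quadraticChar (ZMod p) x := by
  rw [quadraticChar_apply, quadraticCharFun, quadChar]
  by_cases h : x = 0 <;> by_cases h2 : IsSquare x <;> simp [h, h2]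

lemma quadChar_sq (a : ZMod p) (ha : a ≠ 0) : quadChar p a * quadChar p a = 1 := by
  rw [quadChar]
  by_cases h2 : IsSquare a <;> simp [ha, h2]

variable (hp4 : p % 4 = 1)
include hp4

lemma p_odd : p ≠ 2 := by intro h; rw [h] at hp4; omega

lemma ringChar_ne_two : ringChar (ZMod p) ≠ 2 := by
  rw [ZMod.ringChar_zmod_n]; exact p_odd hp4

lemma quadChar_mul (a b : ZMod p) : quadChar p (a * b) = quadChar p a * quadChar p b := by
  rw [quadChar_eq, quadChar_eq, quadChar_eq]; exact map_mul (quadraticChar (ZMod p)) a b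

lemma quadChar_sum_zero : ∑ a : ZMod p, (quadChar p a : ℂ) = 0 := by
  have := quadraticChar_sum_zero (ringChar_ne_two hp4)
  have h2 : ∑ a : ZMod p, quadChar p a = 0 := by
    rw [show (∑ a : ZMod p, quadChar p a) = ∑ a : ZMod p, quadraticChar (ZMod p) a from
      Finset.sum_congr rfl fun a _ => quadChar_eq a]
    exact this
  exact_mod_cast congrArg (fun z : ℤ => (z : ℂ)) h2

lemma quadChar_neg_one : quadChar p (-1 : ZMod p) = 1 := by
  have : IsSquare (-1 : ZMod p) := ZMod.exists_sq_eq_neg_one_iff.mpr (by omega)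
  rw [quadChar]
  have hne : (-1 : ZMod p) ≠ 0 := by
    intro h
    have : (1 : ZMod p) = 0 := by linear_combination -h
    exact one_ne_zero this
  simp [hne, this]

lemma quadChar_neg (a : ZMod p) : quadChar p (-a) = quadChar p a := by
  rw [show -a = (-1) * a by ring, quadChar_mul hp4, quadChar_neg_one hp4, one_mul]

lemma quadChar_inv (a : ZMod p) : quadChar p a⁻¹ = quadChar p a := by
  by_cases ha : a = 0
  · simp [ha]
  · have h1 : quadChar p (a⁻¹ * a) = 1 := by
      rw [inv_mul_cancel₀ ha, quadChar, if_neg one_ne_zero, if_pos IsSquare.one]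
    rw [quadChar_mul hp4] at h1
    have := quadChar_sq (p := p) a ha
    have hc0 : quadChar p a ≠ 0 := by intro h; rw [h] at this; simp at this
    exact mul_right_cancel₀ hc0 (h1.trans this.symm)

def gS (p : ℕ) [Fact p.Prime] : ℂ := ∑ b : ZMod p, (quadChar p b : ℂ) * addChar' p b

lemma twisted (c : ZMod p) :
    ∑ b : ZMod p, (quadChar p b : ℂ) * addChar' p (b * c) = (quadChar p c : ℂ) * gS p := by
  by_cases hc : c = 0
  · have h0 : ∀ b : ZMod p, (quadChar p b : ℂ) * addChar' p (b * c) = (quadChar p b : ℂ) := by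
      intro b; rw [hc, mul_zero, e_zero, mul_one]
    rw [Finset.sum_congr rfl (fun b _ => h0 b), quadChar_sum_zero hp4, hc]
    simp [quadChar]
  · have hcinv : c⁻¹ ≠ 0 := inv_ne_zero hc
    have hre := Equiv.sum_comp (Equiv.mulRight₀ c⁻¹ hcinv)
      (fun b => (quadChar p b : ℂ) * addChar' p (b * c))
    rw [← hre]
    have hpt : ∀ t : ZMod p, (quadChar p ((Equiv.mulRight₀ c⁻¹ hcinv) t) : ℂ) *
        addChar' p (((Equiv.mulRight₀ c⁻¹ hcinv) t) * c)
        = (quadChar p c : ℂ) * ((quadChar p t : ℂ) * addChar' p t) := by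
      intro t
      have h1 : ((Equiv.mulRight₀ c⁻¹ hcinv) t) = t * c⁻¹ := rfl
      rw [h1, quadChar_mul hp4, quadChar_inv hp4, mul_assoc t, inv_mul_cancel₀ hc, mul_one]
      push_cast; ring
    rw [Finset.sum_congr rfl (fun t _ => hpt t), ← Finset.mul_sum, gS]

lemma gauss_sq : gS p * gS p = (p : ℂ) := by
  have expand : gS p * gS p = ∑ b : ZMod p, ((quadChar p b : ℂ) * addChar' p b) * gS p := by
    rw [gS, Finset.sum_mul]
  have step : ∀ b : ZMod p, ((quadChar p b : ℂ) * addChar' p b) * gS p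
      = ∑ t : ZMod p, (quadChar p t : ℂ) * addChar' p (b * (1 + t)) := by
    intro b
    by_cases hb : b = 0
    · have : ∀ t : ZMod p, (quadChar p t : ℂ) * addChar' p (b * (1 + t))
          = (quadChar p t : ℂ) := by
        intro t; rw [hb, zero_mul, e_zero, mul_one]
      rw [Finset.sum_congr rfl (fun t _ => this t), quadChar_sum_zero hp4, hb]
      simp [quadChar]
    · rw [gS, Finset.mul_sum]
      have hre := Equiv.sum_comp (Equiv.mulLeft₀ b hb)
        (fun b' => ((quadChar p b : ℂ) * addChar' p b) * ((quadChar p b' : ℂ) * addChar' p b'))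
      rw [← hre]
      refine Finset.sum_congr rfl fun t _ => ?_
      have h1 : ((Equiv.mulLeft₀ b hb) t) = b * t := rfl
      rw [h1, quadChar_mul hp4]
      push_cast
      have hsq : ((quadChar p b : ℂ)) * (quadChar p b : ℂ) = 1 := by
        exact_mod_cast congrArg (fun z : ℤ => (z : ℂ)) (quadChar_sq b hb)
      have he : addChar' p b * addChar' p (b * t) = addChar' p (b * (1 + t)) := by
        rw [← e_add]; ring_nf
      calc (quadChar p b : ℂ) * addChar' p b * ((quadChar p b : ℂ) * (quadChar p t : ℂ) * addChar' p (b * t))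
          = ((quadChar p b : ℂ) * (quadChar p b : ℂ)) * (quadChar p t : ℂ) * (addChar' p b * addChar' p (b * t)) := by ring
        _ = (quadChar p t : ℂ) * addChar' p (b * (1 + t)) := by rw [hsq, he, one_mul]
  rw [expand, Finset.sum_congr rfl (fun b _ => step b), Finset.sum_comm]
  have inner : ∀ t : ZMod p, ∑ b : ZMod p, (quadChar p t : ℂ) * addChar' p (b * (1 + t))
      = (quadChar p t : ℂ) * (if (1 + t) = 0 then (p:ℂ) else 0) := by
    intro t
    rw [← Finset.mul_sum]
    congr 1
    rw [← sum_e (1 + t)]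
    exact Finset.sum_congr rfl fun b _ => by rw [mul_comm b]
  rw [Finset.sum_congr rfl (fun t _ => inner t)]
  rw [Finset.sum_eq_single (-1 : ZMod p)]
  · rw [if_pos (by ring), quadChar_neg_one hp4]; simp
  · intro t _ ht
    rw [if_neg (by intro h; apply ht; linear_combination h), mul_zero]
  · intro h; exact absurd (Finset.mem_univ _) h

def Bform (p : ℕ) [Fact p.Prime] (f g : ZMod p → ℝ) : ℝ :=
  ∑ a : ZMod p, ∑ b : ZMod p, f a * g b * ((quadChar p (a - b) : ℤ) : ℝ)

def QRes' (p : ℕ) : Type := {b : ZMod p // b ≠ 0 ∧ IsSquare b}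

def vecOf (p : ℕ) (f : ZMod p → ℝ) : Option (ZMod p) → ℂ :=
  fun c => match c with | none => 0 | some a => (f a : ℂ)

omit hp4 in lemma sq_norm_eq (z : ℂ) : ((‖z‖^2 : ℝ) : ℂ) = z * (starRingEnd ℂ) z := by
  rw [Complex.sq_norm, Complex.mul_conj]

lemma key_coeff (c : ZMod p) :
    (1 : ℂ) + 2 * ∑ b : {b : ZMod p // b ≠ 0 ∧ IsSquare b}, addChar' p (b.1 * c)
    = (if c = 0 then (p:ℂ) else 0) + (quadChar p c : ℂ) * gS p := by
  have split : ∀ b : ZMod p, ((1 + (quadChar p b : ℂ)) * addChar' p (b * c))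
      = (if b = 0 then 1 else 0) + (if (b ≠ 0 ∧ IsSquare b) then 2 * addChar' p (b * c) else 0) := by
    intro b
    by_cases hb : b = 0
    · subst hb; simp [quadChar, e_zero, zero_mul]
    · by_cases hs : IsSquare b
      · rw [quadChar, if_neg hb, if_pos hs, if_neg hb, if_pos ⟨hb, hs⟩]
        push_cast; ring
      · rw [quadChar, if_neg hb, if_neg hs, if_neg hb, if_neg (by tauto)]
        push_cast; ring
  have lhs_eq : ∑ b : ZMod p, ((1 + (quadChar p b : ℂ)) * addChar' p (b * c))
      = (1 : ℂ) + 2 * ∑ b : {b : ZMod p // b ≠ 0 ∧ IsSquare b}, addChar' p (b.1 * c) := by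
    rw [Finset.sum_congr rfl (fun b _ => split b), Finset.sum_add_distrib]
    congr 1
    · simp
    · rw [Finset.sum_ite, Finset.sum_const_zero, add_zero, Finset.mul_sum]
      rw [← Finset.sum_subtype_eq_sum_filter, Finset.subtype_univ]
  have rhs_eq : ∑ b : ZMod p, ((1 + (quadChar p b : ℂ)) * addChar' p (b * c))
      = (if c = 0 then (p:ℂ) else 0) + (quadChar p c : ℂ) * gS p := by
    have : ∀ b : ZMod p, ((1 + (quadChar p b : ℂ)) * addChar' p (b * c))
        = addChar' p (b * c) + (quadChar p b : ℂ) * addChar' p (b * c) := by intro b; ring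
    rw [Finset.sum_congr rfl (fun b _ => this b), Finset.sum_add_distrib,
      show (∑ x : ZMod p, addChar' p (x*c)) = ∑ x : ZMod p, addChar' p (c*x) from
        Finset.sum_congr rfl (fun x _ => by rw [mul_comm]),
      sum_e c, twisted hp4 c]
  rw [← lhs_eq, rhs_eq]

abbrev QR (p : ℕ) : Type := QRes p

omit hp4 in lemma row_none (f : ZMod p → ℝ) :
    ∑ n : Option (ZMod p), PaleyETF p none n * vecOf p f n
      = ((1 / Real.sqrt p : ℝ) : ℂ) * ∑ a : ZMod p, (f a : ℂ) := by
  rw [Fintype.sum_option, Finset.mul_sum]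
  simp [PaleyETF, vecOf]

omit hp4 in lemma row_some (f : ZMod p → ℝ) (b : QR p) :
    ∑ n : Option (ZMod p), PaleyETF p (some b) n * vecOf p f n
      = ((Real.sqrt (2 / p) : ℝ) : ℂ) * ∑ a : ZMod p, (f a : ℂ) * addChar' p (b.1 * a) := by
  rw [Fintype.sum_option, Finset.mul_sum]
  simp only [PaleyETF, vecOf, mul_zero, zero_add]
  exact Finset.sum_congr rfl fun a _ => by ring

omit hp4 in lemma conj_sum_ofReal (g : ZMod p → ℝ) :
    (starRingEnd ℂ) (∑ a : ZMod p, (g a : ℂ)) = ∑ a : ZMod p, (g a : ℂ) := by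
  rw [map_sum]; exact Finset.sum_congr rfl fun a _ => Complex.conj_ofReal _

lemma main_complex (f : ZMod p → ℝ) :
    ((∑ m : Option (QR p), ‖∑ n : Option (ZMod p), PaleyETF p m n * vecOf p f n‖^2 : ℝ) : ℂ)
    = ((∑ a : ZMod p, (f a)^2 : ℝ) : ℂ) + gS p / p * ((Bform p f f : ℝ) : ℂ) := by
  have cast1 : ((∑ m : Option (QR p), ‖∑ n : Option (ZMod p), PaleyETF p m n * vecOf p f n‖^2 : ℝ) : ℂ)
      = ∑ m : Option (QR p), ((∑ n : Option (ZMod p), PaleyETF p m n * vecOf p f n) *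
          (starRingEnd ℂ) (∑ n : Option (ZMod p), PaleyETF p m n * vecOf p f n)) := by
    rw [Complex.ofReal_sum]
    exact Finset.sum_congr rfl fun m _ => sq_norm_eq _
  rw [cast1, Fintype.sum_option]
  have t0 : (∑ n : Option (ZMod p), PaleyETF p none n * vecOf p f n) *
        (starRingEnd ℂ) (∑ n : Option (ZMod p), PaleyETF p none n * vecOf p f n)
      = ((1 / p : ℝ) : ℂ) * ∑ a : ZMod p, ∑ a' : ZMod p, (f a : ℂ) * (f a' : ℂ) := by
    rw [row_none, map_mul, Complex.conj_ofReal, conj_sum_ofReal]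
    rw [mul_mul_mul_comm, ← Complex.ofReal_mul, Finset.sum_mul_sum]
    congr 2
    rw [div_mul_div_comm, one_mul, Real.mul_self_sqrt (Nat.cast_nonneg p)]
  have tb : ∀ b : QR p, (∑ n : Option (ZMod p), PaleyETF p (some b) n * vecOf p f n) *
        (starRingEnd ℂ) (∑ n : Option (ZMod p), PaleyETF p (some b) n * vecOf p f n)
      = ((2 / p : ℝ) : ℂ) * ∑ a : ZMod p, ∑ a' : ZMod p,
          (f a : ℂ) * (f a' : ℂ) * addChar' p (b.1 * (a - a')) := by
    intro b
    rw [row_some, map_mul, Complex.conj_ofReal, mul_mul_mul_comm, ← Complex.ofReal_mul,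
      Real.mul_self_sqrt (by positivity)]
    congr 1
    rw [map_sum, Finset.sum_mul_sum]
    refine Finset.sum_congr rfl fun a _ => Finset.sum_congr rfl fun a' _ => ?_
    rw [map_mul, Complex.conj_ofReal, e_conj, mul_mul_mul_comm, ← e_add]
    congr 1
    ring
  rw [t0, Finset.sum_congr rfl (fun b _ => tb b), ← Finset.mul_sum]
  have hswap : (∑ b : QR p, ∑ a : ZMod p, ∑ a' : ZMod p, (f a : ℂ) * (f a' : ℂ) * addChar' p (b.1 * (a - a')))
      = ∑ a : ZMod p, ∑ a' : ZMod p, ∑ b : QR p, (f a : ℂ) * (f a' : ℂ) * addChar' p (b.1 * (a - a')) := by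
    rw [Finset.sum_comm]
    exact Finset.sum_congr rfl fun a _ => Finset.sum_comm
  rw [hswap, Finset.mul_sum, Finset.mul_sum, ← Finset.sum_add_distrib]
  have inner_eq : ∀ a : ZMod p,
      ((1 / p : ℝ) : ℂ) * (∑ a' : ZMod p, (f a : ℂ) * (f a' : ℂ)) +
        ((2 / p : ℝ) : ℂ) * (∑ a' : ZMod p, ∑ b : QR p, (f a : ℂ) * (f a' : ℂ) * addChar' p (b.1 * (a - a')))
      = ∑ a' : ZMod p, ((if a' = a then ((f a : ℂ) * (f a' : ℂ)) else 0)
          + gS p / p * ((f a : ℂ) * (f a' : ℂ) * (quadChar p (a - a') : ℂ))) := by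
    intro a
    rw [Finset.mul_sum, Finset.mul_sum, ← Finset.sum_add_distrib]
    refine Finset.sum_congr rfl fun a' _ => ?_
    have pull : ∑ b : QR p, (f a : ℂ) * (f a' : ℂ) * addChar' p (b.1 * (a - a'))
        = (f a : ℂ) * (f a' : ℂ) * ∑ b : QR p, addChar' p (b.1 * (a - a')) := by
      rw [Finset.mul_sum]
    rw [pull]
    have hkc := key_coeff hp4 (a - a')
    have step1 : ((1 / p : ℝ) : ℂ) * ((f a : ℂ) * (f a' : ℂ)) +
          ((2 / p : ℝ) : ℂ) * ((f a : ℂ) * (f a' : ℂ) * ∑ b : QR p, addChar' p (b.1 * (a - a')))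
        = (f a : ℂ) * (f a' : ℂ) * (((1:ℂ) + 2 * ∑ b : QR p, addChar' p (b.1 * (a - a'))) / p) := by
      push_cast
      ring
    rw [step1, hkc]
    by_cases hd : a' = a
    · subst hd
      rw [if_pos rfl, sub_self, if_pos rfl]
      rw [show quadChar p (0 : ZMod p) = 0 by simp [quadChar]]
      push_cast
      field_simp
      simp [p_ne_zero]
    · rw [if_neg hd, if_neg (by intro h; exact hd (by linear_combination -h))]
      push_cast
      field_simp
      ring
  rw [Finset.sum_congr rfl (fun a _ => inner_eq a)]
  have split2 : (∑ a : ZMod p, ∑ a' : ZMod p, ((if a' = a then (f a:ℂ)*(f a':ℂ) else 0)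
        + gS p / p * ((f a:ℂ)*(f a':ℂ)*(quadChar p (a-a'):ℂ))))
      = (∑ a : ZMod p, ∑ a' : ZMod p, (if a' = a then (f a:ℂ)*(f a':ℂ) else 0))
        + ∑ a : ZMod p, ∑ a' : ZMod p, gS p / p * ((f a:ℂ)*(f a':ℂ)*(quadChar p (a-a'):ℂ)) := by
    rw [← Finset.sum_add_distrib]
    exact Finset.sum_congr rfl fun a _ => Finset.sum_add_distrib
  rw [split2]
  congr 1
  · rw [Complex.ofReal_sum]
    refine Finset.sum_congr rfl fun a _ => ?_
    rw [Finset.sum_ite_eq' Finset.univ a (fun a' => (f a : ℂ) * (f a' : ℂ)), if_pos (Finset.mem_univ a)]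
    push_cast
    ring
  · rw [Bform, Complex.ofReal_sum, Finset.mul_sum]
    refine Finset.sum_congr rfl fun a _ => ?_
    rw [Complex.ofReal_sum, Finset.mul_sum]
    refine Finset.sum_congr rfl fun a' _ => ?_
    push_cast
    ring

lemma gauss_real : ∃ gr : ℝ, ((gr : ℝ) : ℂ) = gS p ∧ gr^2 = p := by
  have hsq : ((Real.sqrt p : ℝ) : ℂ)^2 = (p : ℂ) := by
    rw [← Complex.ofReal_pow, Real.sq_sqrt (Nat.cast_nonneg p)]
    norm_num
  have hz : (gS p - ((Real.sqrt p : ℝ) : ℂ)) * (gS p + ((Real.sqrt p : ℝ) : ℂ)) = 0 := by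
    have hg := gauss_sq hp4
    linear_combination hg - hsq
  rcases mul_eq_zero.mp hz with h | h
  · exact ⟨Real.sqrt p, by linear_combination -h, Real.sq_sqrt (Nat.cast_nonneg p)⟩
  · refine ⟨-Real.sqrt p, ?_, by rw [neg_pow]; simp [Real.sq_sqrt (Nat.cast_nonneg p)]⟩
    push_cast
    linear_combination -h

omit hp4 in
lemma sum_norm_vecOf (f : ZMod p → ℝ) :
    ∑ n : Option (ZMod p), ‖vecOf p f n‖^2 = ∑ a : ZMod p, (f a)^2 := by
  rw [Fintype.sum_option]
  simp only [vecOf, norm_zero]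
  rw [zero_pow (by norm_num), zero_add]
  refine Finset.sum_congr rfl fun a _ => ?_
  rw [Complex.norm_real, Real.norm_eq_abs, sq_abs]

omit hp4 in
lemma card_vecOf (f : ZMod p → ℝ) :
    (Finset.univ.filter fun n : Option (ZMod p) => vecOf p f n ≠ 0).card
      = (Finset.univ.filter fun a : ZMod p => f a ≠ 0).card := by
  refine (Finset.card_bij (fun a _ => some a) ?_ ?_ ?_).symm
  · intro a ha
    rw [Finset.mem_filter] at ha ⊢
    refine ⟨Finset.mem_univ _, ?_⟩
    simpa [vecOf] using ha.2
  · intro a _ b _ h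
    exact Option.some_injective _ h
  · intro n hn
    rw [Finset.mem_filter] at hn
    match n with
    | none => exact absurd rfl hn.2
    | some a =>
      refine ⟨a, ?_, rfl⟩
      rw [Finset.mem_filter]
      refine ⟨Finset.mem_univ _, ?_⟩
      intro h
      exact hn.2 (by simp [vecOf, h])

lemma Bform_bound (K δ : ℝ) (hRIP : HasRIP (PaleyETF p) K δ)
    (f : ZMod p → ℝ) (hsupp : ((Finset.univ.filter fun a => f a ≠ 0).card : ℝ) ≤ K) :
    |Bform p f f| ≤ δ * Real.sqrt p * ∑ a : ZMod p, (f a)^2 := by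
  obtain ⟨gr, hgr, hgr2⟩ := gauss_real hp4
  have hgr_ne : gr ≠ 0 := by
    intro h
    rw [h] at hgr2
    have hp0 : (0:ℝ) < p := by exact_mod_cast p_pos (p := p)
    norm_num at hgr2
    linarith
  have hRIPf := hRIP (vecOf p f) (by rw [card_vecOf]; exact hsupp)
  rw [sum_norm_vecOf] at hRIPf
  have hSf_nonneg : 0 ≤ ∑ a : ZMod p, (f a)^2 := Finset.sum_nonneg fun a _ => sq_nonneg _
  have hmainC := main_complex hp4 f
  rw [← hgr] at hmainC
  have hmain : ∑ m : Option (QRes p), ‖∑ n : Option (ZMod p), PaleyETF p m n * vecOf p f n‖^2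
      = (∑ a : ZMod p, (f a)^2) + gr / p * Bform p f f := by
    have hcast : (((∑ m : Option (QRes p), ‖∑ n : Option (ZMod p), PaleyETF p m n * vecOf p f n‖^2 : ℝ)) : ℂ)
        = (((∑ a : ZMod p, (f a)^2) + gr / p * Bform p f f : ℝ) : ℂ) := by
      rw [hmainC]; push_cast; ring
    exact_mod_cast hcast
  have hineq : |gr / p * Bform p f f| ≤ δ * ∑ a : ZMod p, (f a)^2 := by
    rw [hmain] at hRIPf
    rw [abs_le]
    constructor <;> nlinarith [hRIPf.1, hRIPf.2]
  have habs : |gr / p * Bform p f f| = Real.sqrt p / p * |Bform p f f| := by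
    rw [abs_mul, abs_div]
    congr 2
    · rw [← Real.sqrt_sq_eq_abs, hgr2]
    · exact abs_of_nonneg (Nat.cast_nonneg p)
  rw [habs] at hineq
  have hp0 : (0:ℝ) < p := by exact_mod_cast p_pos (p := p)
  have hsp : 0 < Real.sqrt p := Real.sqrt_pos.mpr hp0
  have hss : Real.sqrt p * Real.sqrt p = p := Real.mul_self_sqrt (le_of_lt hp0)
  have h2 := mul_le_mul_of_nonneg_left hineq hp0.le
  have h3 : (p:ℝ) * (Real.sqrt p / p * |Bform p f f|) = Real.sqrt p * |Bform p f f| := by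
    field_simp
  rw [h3] at h2
  rw [show δ * Real.sqrt p * ∑ a : ZMod p, (f a)^2
      = (δ * p * ∑ a : ZMod p, (f a)^2) / Real.sqrt p from by
    rw [eq_div_iff hsp.ne']; linear_combination (δ * ∑ a : ZMod p, (f a)^2) * hss]
  rw [le_div_iff₀ hsp]
  calc |Bform p f f| * Real.sqrt p = Real.sqrt p * |Bform p f f| := by ring
    _ ≤ (p:ℝ) * (δ * ∑ a : ZMod p, (f a)^2) := h2
    _ = δ * p * ∑ a : ZMod p, (f a)^2 := by ring

omit hp4 in
lemma Bform_bilin (c d : ℝ) (u v : ZMod p → ℝ) :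
    Bform p (fun x => c * u x) (fun y => d * v y) = c * d * Bform p u v := by
  simp only [Bform, Finset.mul_sum]
  refine Finset.sum_congr rfl fun a _ => ?_
  refine Finset.sum_congr rfl fun b _ => ?_
  ring

omit hp4 in
lemma Bform_add_left (u v g : ZMod p → ℝ) :
    Bform p (fun x => u x + v x) g = Bform p u g + Bform p v g := by
  simp only [Bform, ← Finset.sum_add_distrib]
  refine Finset.sum_congr rfl fun a _ => Finset.sum_congr rfl fun b _ => ?_
  ring

omit hp4 in
lemma Bform_add_right (u g h : ZMod p → ℝ) :
    Bform p u (fun y => g y + h y) = Bform p u g + Bform p u h := by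
  simp only [Bform, ← Finset.sum_add_distrib]
  refine Finset.sum_congr rfl fun a _ => Finset.sum_congr rfl fun b _ => ?_
  ring

lemma Bform_symm (u v : ZMod p → ℝ) : Bform p u v = Bform p v u := by
  simp only [Bform]
  rw [Finset.sum_comm]
  refine Finset.sum_congr rfl fun a _ => Finset.sum_congr rfl fun b _ => ?_
  rw [show a - b = -(b - a) by ring, quadChar_neg hp4]
  ring

def indR (p : ℕ) (U : Finset (ZMod p)) : ZMod p → ℝ := fun x => if x ∈ U then 1 else 0

omit hp4 in
lemma sum_indR_sq (U : Finset (ZMod p)) : ∑ x : ZMod p, (indR p U x)^2 = U.card := by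
  rw [show (∑ x : ZMod p, (indR p U x)^2) = ∑ x : ZMod p, (if x ∈ U then (1:ℝ) else 0) from
    Finset.sum_congr rfl fun x _ => by rw [indR]; split_ifs <;> norm_num]
  rw [Finset.sum_ite_mem, Finset.univ_inter, Finset.sum_const, nsmul_eq_mul, mul_one]

lemma pair_bound (K δ : ℝ) (hδ : 0 ≤ δ) (hRIP : HasRIP (PaleyETF p) K δ)
    (A B : Finset (ZMod p)) (hAB : ((A ∪ B).card : ℝ) ≤ K) :
    |Bform p (indR p A) (indR p B)| ≤ δ * Real.sqrt p * (A.card + B.card) / 2 := by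
  set f := indR p A
  set g := indR p B
  have hsupp_pm : ∀ c : ℝ, ((Finset.univ.filter fun a : ZMod p => (f a + c * g a) ≠ 0).card : ℝ) ≤ K := by
    intro c
    refine le_trans ?_ hAB
    have hsub : (Finset.univ.filter fun a : ZMod p => (f a + c * g a) ≠ 0) ⊆ A ∪ B := by
      intro x hx
      rw [Finset.mem_filter] at hx
      by_contra hxAB
      rw [Finset.mem_union] at hxAB
      push_neg at hxAB
      apply hx.2
      simp [f, g, indR, if_neg hxAB.1, if_neg hxAB.2]
    exact_mod_cast Finset.card_le_card hsub
  have hplus := Bform_bound hp4 K δ hRIP (fun a => f a + 1 * g a) (hsupp_pm 1)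
  have hminus := Bform_bound hp4 K δ hRIP (fun a => f a + (-1) * g a) (hsupp_pm (-1))
  have hsum_plus : ∑ a : ZMod p, (f a + 1 * g a)^2 + ∑ a : ZMod p, (f a + (-1) * g a)^2
      = 2 * ((A.card : ℝ) + B.card) := by
    rw [← Finset.sum_add_distrib]
    rw [show (∑ a : ZMod p, ((f a + 1 * g a)^2 + (f a + (-1) * g a)^2))
        = ∑ a : ZMod p, (2 * (f a)^2 + 2 * (g a)^2) from
      Finset.sum_congr rfl fun a _ => by ring]
    rw [Finset.sum_add_distrib, ← Finset.mul_sum, ← Finset.mul_sum,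
      sum_indR_sq A, sum_indR_sq B]
    ring
  have hpolar : Bform p (fun a => f a + 1 * g a) (fun a => f a + 1 * g a)
      - Bform p (fun a => f a + (-1) * g a) (fun a => f a + (-1) * g a)
      = 4 * Bform p f g := by
    have e1 : Bform p (fun a => f a + 1 * g a) (fun a => f a + 1 * g a)
        = Bform p f f + Bform p f g + Bform p g f + Bform p g g := by
      rw [Bform_add_left, Bform_add_right, Bform_add_right]
      have h1 : Bform p (fun x => 1 * g x) f = Bform p g f := by
        rw [show (fun x => 1 * g x) = g from funext fun x => one_mul _]
      have h2 : Bform p f (fun x => 1 * g x) = Bform p f g := by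
        rw [show (fun x => 1 * g x) = g from funext fun x => one_mul _]
      have h3 : Bform p (fun x => 1 * g x) (fun x => 1 * g x) = Bform p g g := by
        rw [show (fun x => 1 * g x) = g from funext fun x => one_mul _]
      rw [h1, h2, h3]; ring
    have e2 : Bform p (fun a => f a + (-1) * g a) (fun a => f a + (-1) * g a)
        = Bform p f f - Bform p f g - Bform p g f + Bform p g g := by
      rw [Bform_add_left, Bform_add_right, Bform_add_right]
      have h1 : Bform p (fun x => (-1) * g x) f = -Bform p g f := by
        have := Bform_bilin (-1) 1 g f (p := p)
        simp only [one_mul] at this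
        rw [show (fun y => f y) = f from rfl] at this
        rw [this]; ring
      have h2 : Bform p f (fun x => (-1) * g x) = -Bform p f g := by
        have := Bform_bilin 1 (-1) f g (p := p)
        simp only [one_mul] at this
        rw [this]; ring
      have h3 : Bform p (fun x => (-1) * g x) (fun x => (-1) * g x) = Bform p g g := by
        rw [Bform_bilin]; ring
      rw [h1, h2, h3]; ring
    have hsymm := Bform_symm hp4 f g
    rw [e1, e2]
    rw [← hsymm]
    ring
  have h4 : 4 * |Bform p f g| ≤ δ * Real.sqrt p * (2 * ((A.card : ℝ) + B.card)) := by
    have := abs_sub (Bform p (fun a => f a + 1 * g a) (fun a => f a + 1 * g a))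
      (Bform p (fun a => f a + (-1) * g a) (fun a => f a + (-1) * g a))
    calc 4 * |Bform p f g| = |4 * Bform p f g| := by
          rw [abs_mul]; norm_num
      _ ≤ |Bform p (fun a => f a + 1 * g a) (fun a => f a + 1 * g a)|
          + |Bform p (fun a => f a + (-1) * g a) (fun a => f a + (-1) * g a)| := by
          rw [← hpolar]; exact abs_sub _ _
      _ ≤ δ * Real.sqrt p * ∑ a : ZMod p, (f a + 1 * g a)^2
          + δ * Real.sqrt p * ∑ a : ZMod p, (f a + (-1) * g a)^2 := add_le_add hplus hminus
      _ = δ * Real.sqrt p * (2 * ((A.card : ℝ) + B.card)) := by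
          rw [← mul_add, hsum_plus]
  linarith [h4]

omit hp4 in
lemma flat_base (s : ℕ) (hs : 1 ≤ s)
    (Ψ : (ZMod p → ℝ) → ℝ) (C : ℝ)
    (hflat : ∀ S : Finset (ZMod p), S.card = s → |Ψ (fun x => if x ∈ S then 1/(s:ℝ) else 0)| ≤ C)
    (μ : ZMod p → ℝ) (h0 : ∀ x, 0 ≤ μ x) (hsb : ∀ x, μ x ≤ 1/(s:ℝ))
    (h1 : ∑ x : ZMod p, μ x = 1)
    (hF : (Finset.univ.filter fun x => 0 < μ x ∧ μ x < 1/(s:ℝ)) = ∅) : |Ψ μ| ≤ C := by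
  have hs0 : (0:ℝ) < s := by exact_mod_cast hs
  have hT : ∀ x ∈ Finset.univ.filter (fun x : ZMod p => μ x ≠ 0), μ x = 1/(s:ℝ) := by
    intro x hx
    rw [Finset.mem_filter] at hx
    have hpos : 0 < μ x := lt_of_le_of_ne (h0 x) (Ne.symm hx.2)
    have hnotF : x ∉ (Finset.univ.filter fun x => 0 < μ x ∧ μ x < 1/(s:ℝ)) := by
      rw [hF]; exact Finset.notMem_empty x
    rw [Finset.mem_filter] at hnotF
    push_neg at hnotF
    exact le_antisymm (hsb x) (hnotF (Finset.mem_univ x) hpos)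
  have hsumT : ∑ x ∈ Finset.univ.filter (fun x : ZMod p => μ x ≠ 0), μ x = 1 := by
    rw [← h1]
    apply Finset.sum_subset (Finset.filter_subset _ _)
    intro x _ hx
    rw [Finset.mem_filter] at hx
    push_neg at hx
    exact hx (Finset.mem_univ x)
  have hTcard : ((Finset.univ.filter (fun x : ZMod p => μ x ≠ 0)).card : ℝ) * (1/(s:ℝ)) = 1 := by
    have hT2 : ∑ x ∈ Finset.univ.filter (fun x : ZMod p => μ x ≠ 0), μ x
        = ((Finset.univ.filter (fun x : ZMod p => μ x ≠ 0)).card : ℝ) * (1/(s:ℝ)) := by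
      rw [Finset.sum_congr rfl hT, Finset.sum_const, nsmul_eq_mul]
    rw [← hT2]
    exact hsumT
  have hTcard' : (Finset.univ.filter (fun x : ZMod p => μ x ≠ 0)).card = s := by
    have hr : ((Finset.univ.filter (fun x : ZMod p => μ x ≠ 0)).card : ℝ) = s := by
      calc ((Finset.univ.filter (fun x : ZMod p => μ x ≠ 0)).card : ℝ)
          = (((Finset.univ.filter (fun x : ZMod p => μ x ≠ 0)).card : ℝ) * (1/(s:ℝ))) * s := by
            rw [mul_assoc, one_div_mul_cancel hs0.ne', mul_one]
        _ = 1 * s := by rw [hTcard]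
        _ = s := one_mul _
    exact_mod_cast hr
  have hμeq : μ = fun x => if x ∈ Finset.univ.filter (fun x : ZMod p => μ x ≠ 0) then 1/(s:ℝ) else 0 := by
    funext x
    by_cases hx : x ∈ Finset.univ.filter (fun x : ZMod p => μ x ≠ 0)
    · rw [if_pos hx]; exact hT x hx
    · rw [if_neg hx]
      rw [Finset.mem_filter] at hx
      push_neg at hx
      exact not_not.mp fun h => h (hx (Finset.mem_univ x))
  rw [hμeq]
  exact hflat _ hTcard'

omit hp4 in
lemma flat_bound (s : ℕ) (hs : 1 ≤ s)
    (Ψ : (ZMod p → ℝ) → ℝ)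
    (hlin : ∀ (a b : ℝ) (u v : ZMod p → ℝ), Ψ (fun x => a * u x + b * v x) = a * Ψ u + b * Ψ v)
    (C : ℝ)
    (hflat : ∀ S : Finset (ZMod p), S.card = s → |Ψ (fun x => if x ∈ S then 1/(s:ℝ) else 0)| ≤ C)
    (μ : ZMod p → ℝ) (hμ0 : ∀ x, 0 ≤ μ x) (hμs : ∀ x, μ x ≤ 1/(s:ℝ))
    (hμ1 : ∑ x : ZMod p, μ x = 1) : |Ψ μ| ≤ C := by
  have hs0 : (0:ℝ) < s := by exact_mod_cast hs
  suffices h : ∀ n : ℕ, ∀ μ : ZMod p → ℝ, (∀ x, 0 ≤ μ x) → (∀ x, μ x ≤ 1/(s:ℝ)) →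
      (∑ x : ZMod p, μ x = 1) →
      (Finset.univ.filter fun x => 0 < μ x ∧ μ x < 1/(s:ℝ)).card ≤ n → |Ψ μ| ≤ C by
    exact h _ μ hμ0 hμs hμ1 le_rfl
  intro n
  induction n with
  | zero =>
    intro μ h0 hsb h1 hcard
    exact flat_base s hs Ψ C hflat μ h0 hsb h1 (Finset.card_eq_zero.mp (Nat.le_zero.mp hcard))
  | succ n ih =>
    intro μ h0 hsb h1 hcard
    by_cases hF : (Finset.univ.filter fun x => 0 < μ x ∧ μ x < 1/(s:ℝ)) = ∅
    · exact flat_base s hs Ψ C hflat μ h0 hsb h1 hF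
    obtain ⟨x₀, hx₀mem⟩ := Finset.nonempty_iff_ne_empty.mpr hF
    rw [Finset.mem_filter] at hx₀mem
    obtain ⟨-, hx₀pos, hx₀lt⟩ := hx₀mem
    have hsumP : ∑ x ∈ Finset.univ.filter (fun x : ZMod p => 0 < μ x), μ x = 1 := by
      rw [← h1]
      apply Finset.sum_subset (Finset.filter_subset _ _)
      intro x _ hx
      rw [Finset.mem_filter] at hx
      push_neg at hx
      exact le_antisymm (hx (Finset.mem_univ x)) (h0 x)
    have hFullP : Finset.univ.filter (fun x : ZMod p => μ x = 1/(s:ℝ))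
        ⊆ Finset.univ.filter (fun x : ZMod p => 0 < μ x) := by
      intro x hx
      rw [Finset.mem_filter] at hx ⊢
      exact ⟨Finset.mem_univ x, by rw [hx.2]; positivity⟩
    have hFull_le : (Finset.univ.filter (fun x : ZMod p => μ x = 1/(s:ℝ))).card ≤ s := by
      have h1' : ∑ x ∈ Finset.univ.filter (fun x : ZMod p => μ x = 1/(s:ℝ)), μ x ≤ 1 := by
        rw [← h1]
        exact Finset.sum_le_sum_of_subset_of_nonneg (Finset.filter_subset _ _)
          (fun x _ _ => h0 x)
      have h2' : ∑ x ∈ Finset.univ.filter (fun x : ZMod p => μ x = 1/(s:ℝ)), μ x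
          = ((Finset.univ.filter (fun x : ZMod p => μ x = 1/(s:ℝ))).card : ℝ) * (1/(s:ℝ)) := by
        rw [Finset.sum_congr rfl (fun x hx => (Finset.mem_filter.mp hx).2),
          Finset.sum_const, nsmul_eq_mul]
      have hr : ((Finset.univ.filter (fun x : ZMod p => μ x = 1/(s:ℝ))).card : ℝ) ≤ s := by
        rw [h2'] at h1'
        have h3 := mul_le_mul_of_nonneg_right h1' hs0.le
        rw [mul_assoc, one_div_mul_cancel hs0.ne', mul_one, one_mul] at h3
        exact h3
      exact_mod_cast hr
    have hP₀_gt : s < (Finset.univ.filter (fun x : ZMod p => 0 < μ x)).card := by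
      have hx₀P : x₀ ∈ Finset.univ.filter (fun x : ZMod p => 0 < μ x) := by
        rw [Finset.mem_filter]; exact ⟨Finset.mem_univ _, hx₀pos⟩
      have hlt : ∑ x ∈ Finset.univ.filter (fun x : ZMod p => 0 < μ x), μ x
          < ∑ _x ∈ Finset.univ.filter (fun x : ZMod p => 0 < μ x), 1/(s:ℝ) :=
        Finset.sum_lt_sum (fun i _ => hsb i) ⟨x₀, hx₀P, hx₀lt⟩
      rw [hsumP, Finset.sum_const, nsmul_eq_mul] at hlt
      have hr : (s:ℝ) < ((Finset.univ.filter (fun x : ZMod p => 0 < μ x)).card : ℝ) := by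
        have h3 := mul_lt_mul_of_pos_right hlt hs0
        rw [one_mul, mul_assoc, one_div_mul_cancel hs0.ne', mul_one] at h3
        exact h3
      exact_mod_cast hr
    obtain ⟨S, hFullS, hSP, hScard⟩ := Finset.exists_subsuperset_card_eq hFullP (n := s)
      hFull_le (by omega)
    have hScard' : S.card = s := hScard
    have hSne : S.Nonempty := Finset.card_pos.mp (by omega)
    obtain ⟨xm, hxmS, hxmmin⟩ := Finset.exists_min_image S μ hSne
    have hPS : ∃ y ∈ Finset.univ.filter (fun x : ZMod p => 0 < μ x), y ∉ S := by
      by_contra hcon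
      push_neg at hcon
      have := Finset.card_le_card hcon
      omega
    obtain ⟨y₁, hy₁P, hy₁S⟩ := hPS
    have hcomplne : (Finset.univ \ S).Nonempty :=
      ⟨y₁, Finset.mem_sdiff.mpr ⟨Finset.mem_univ _, hy₁S⟩⟩
    obtain ⟨ym, hymmem, hymmax⟩ := Finset.exists_max_image (Finset.univ \ S) μ hcomplne
    have hymS : ym ∉ S := (Finset.mem_sdiff.mp hymmem).2
    have hmn_pos : 0 < μ xm := (Finset.mem_filter.mp (hSP hxmS)).2
    have hmx_lt : μ ym < 1/(s:ℝ) := by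
      refine lt_of_le_of_ne (hsb ym) (fun h => hymS (hFullS ?_))
      rw [Finset.mem_filter]
      exact ⟨Finset.mem_univ _, h⟩
    have hmx_pos : 0 < μ ym := by
      by_cases hx₀S : x₀ ∈ S
      · have hltS : ∑ x ∈ S, μ x < 1 := by
          have h3 : ∑ x ∈ S, μ x < ∑ _x ∈ S, 1/(s:ℝ) :=
            Finset.sum_lt_sum (fun i _ => hsb i) ⟨x₀, hx₀S, hx₀lt⟩
          rw [Finset.sum_const, hScard', nsmul_eq_mul] at h3
          calc ∑ x ∈ S, μ x < (s:ℝ) * (1/(s:ℝ)) := h3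
            _ = 1 := by field_simp
        have hsplit : ∑ x ∈ Finset.univ \ S, μ x + ∑ x ∈ S, μ x = 1 := by
          rw [Finset.sum_sdiff (Finset.subset_univ S), h1]
        have hoff : 0 < ∑ x ∈ Finset.univ \ S, μ x := by linarith
        by_contra hmx
        push_neg at hmx
        have : ∑ x ∈ Finset.univ \ S, μ x ≤ 0 :=
          Finset.sum_nonpos fun y hy => le_trans (hymmax y hy) hmx
        linarith
      · exact lt_of_lt_of_le hx₀pos
          (hymmax x₀ (Finset.mem_sdiff.mpr ⟨Finset.mem_univ _, hx₀S⟩))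
    set w := min ((s:ℝ) * μ xm) (1 - s * μ ym) with hwdef
    have hss1 : (1/(s:ℝ)) * s = 1 := one_div_mul_cancel hs0.ne'
    have hw_pos : 0 < w := lt_min (by positivity) (by nlinarith [hss1, hmx_lt, hs0])
    have hw_le1 : w ≤ 1 - (s:ℝ) * μ ym := min_le_right _ _
    have hw_lt1 : w < 1 := lt_of_le_of_lt hw_le1 (by nlinarith [mul_pos hs0 hmx_pos])
    have h1w : 0 < 1 - w := by linarith
    have hw_le_smn : w ≤ (s:ℝ) * μ xm := min_le_left _ _
    set μ' := fun x => (μ x - (if x ∈ S then w/(s:ℝ) else 0)) / (1 - w) with hμ'def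
    have hμ'S : ∀ x ∈ S, μ' x = (μ x - w/(s:ℝ)) / (1 - w) := by
      intro x hx; rw [hμ'def]; simp only [if_pos hx]
    have hμ'nS : ∀ x ∉ S, μ' x = μ x / (1 - w) := by
      intro x hx; rw [hμ'def]; simp only [if_neg hx, sub_zero]
    have hμ'0 : ∀ x, 0 ≤ μ' x := by
      intro x
      by_cases hxS : x ∈ S
      · rw [hμ'S x hxS]
        apply div_nonneg _ h1w.le
        have hws : w/(s:ℝ) ≤ μ xm := by rw [div_le_iff₀ hs0]; nlinarith
        linarith [hxmmin x hxS]
      · rw [hμ'nS x hxS]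
        exact div_nonneg (h0 x) h1w.le
    have hμ's : ∀ x, μ' x ≤ 1/(s:ℝ) := by
      intro x
      by_cases hxS : x ∈ S
      · rw [hμ'S x hxS, div_le_iff₀ h1w]
        have e1 : (1/(s:ℝ)) * (1 - w) = 1/(s:ℝ) - w/(s:ℝ) := by ring
        rw [e1]
        linarith [hsb x]
      · rw [hμ'nS x hxS, div_le_iff₀ h1w]
        have hμx_le : μ x ≤ μ ym :=
          hymmax x (Finset.mem_sdiff.mpr ⟨Finset.mem_univ _, hxS⟩)
        have h2 : (s:ℝ) * μ ym ≤ 1 - w := by linarith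
        rw [show (1/(s:ℝ)) * (1 - w) = (1 - w)/(s:ℝ) by ring, le_div_iff₀ hs0]
        nlinarith
    have hμ'1 : ∑ x : ZMod p, μ' x = 1 := by
      rw [hμ'def, ← Finset.sum_div, Finset.sum_sub_distrib, h1]
      have hind : ∑ x : ZMod p, (if x ∈ S then w/(s:ℝ) else 0) = w := by
        rw [Finset.sum_ite_mem, Finset.univ_inter, Finset.sum_const, hScard', nsmul_eq_mul]
        field_simp
      rw [hind]
      field_simp
    have hdecomp : μ = fun x => w * (if x ∈ S then 1/(s:ℝ) else 0) + (1 - w) * μ' x := by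
      funext x
      by_cases hxS : x ∈ S
      · rw [if_pos hxS, hμ'S x hxS]
        field_simp
        ring
      · rw [if_neg hxS, hμ'nS x hxS]
        field_simp
        ring
    have hFsub : (Finset.univ.filter fun x => 0 < μ' x ∧ μ' x < 1/(s:ℝ))
        ⊆ (Finset.univ.filter fun x => 0 < μ x ∧ μ x < 1/(s:ℝ)) := by
      intro x hx
      rw [Finset.mem_filter] at hx ⊢
      obtain ⟨-, h'pos, h'lt⟩ := hx
      refine ⟨Finset.mem_univ _, ?_, ?_⟩
      · by_cases hxS : x ∈ S
        · exact (Finset.mem_filter.mp (hSP hxS)).2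
        · rw [hμ'nS x hxS] at h'pos
          by_contra hcon
          push_neg at hcon
          have : μ x / (1 - w) ≤ 0 := div_nonpos_of_nonpos_of_nonneg hcon h1w.le
          linarith
      · by_cases hxS : x ∈ S
        · rw [hμ'S x hxS, div_lt_iff₀ h1w] at h'lt
          have e1 : (1/(s:ℝ)) * (1 - w) = 1/(s:ℝ) - w/(s:ℝ) := by ring
          rw [e1] at h'lt
          linarith
        · have hμx_le : μ x ≤ μ ym :=
            hymmax x (Finset.mem_sdiff.mpr ⟨Finset.mem_univ _, hxS⟩)
          linarith
    have hwitness : ∃ xe, xe ∈ (Finset.univ.filter fun x => 0 < μ x ∧ μ x < 1/(s:ℝ)) ∧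
        xe ∉ (Finset.univ.filter fun x => 0 < μ' x ∧ μ' x < 1/(s:ℝ)) := by
      by_cases hcase : (s:ℝ) * μ xm ≤ 1 - s * μ ym
      · refine ⟨xm, ?_, ?_⟩
        · rw [Finset.mem_filter]
          refine ⟨Finset.mem_univ _, hmn_pos, ?_⟩
          have hw_eq : w = (s:ℝ) * μ xm := min_eq_left hcase
          have hlt1 : (s:ℝ) * μ xm < 1 := by rw [← hw_eq]; exact hw_lt1
          rw [lt_div_iff₀ hs0]
          nlinarith
        · rw [Finset.mem_filter]
          push_neg
          intro _ hpos
          exfalso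
          have hw_eq : w = (s:ℝ) * μ xm := min_eq_left hcase
          have hz : μ' xm = 0 := by
            rw [hμ'S xm hxmS, hw_eq,
              show (s:ℝ) * μ xm / (s:ℝ) = μ xm by field_simp]
            simp
          rw [hz] at hpos
          exact lt_irrefl 0 hpos
      · refine ⟨ym, ?_, ?_⟩
        · rw [Finset.mem_filter]
          exact ⟨Finset.mem_univ _, hmx_pos, hmx_lt⟩
        · rw [Finset.mem_filter]
          push_neg
          intro _ _
          have hw_eq : w = 1 - (s:ℝ) * μ ym := min_eq_right (le_of_lt (not_le.mp hcase))
          have h1weq : 1 - w = (s:ℝ) * μ ym := by rw [hw_eq]; ring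
          have hz : μ' ym = 1/(s:ℝ) := by
            rw [hμ'nS ym hymS, h1weq, div_eq_div_iff (mul_pos hs0 hmx_pos).ne' hs0.ne']
            ring
          rw [hz]
    obtain ⟨xe, hxe_in, hxe_out⟩ := hwitness
    have hcard' : (Finset.univ.filter fun x => 0 < μ' x ∧ μ' x < 1/(s:ℝ)).card ≤ n := by
      have hsub_erase : (Finset.univ.filter fun x => 0 < μ' x ∧ μ' x < 1/(s:ℝ))
          ⊆ (Finset.univ.filter fun x => 0 < μ x ∧ μ x < 1/(s:ℝ)).erase xe :=
        Finset.subset_erase.mpr ⟨hFsub, hxe_out⟩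
      have := Finset.card_le_card hsub_erase
      rw [Finset.card_erase_of_mem hxe_in] at this
      omega
    have hihres := ih μ' hμ'0 hμ's hμ'1 hcard'
    have hΨ : Ψ μ = w * Ψ (fun x => if x ∈ S then 1/(s:ℝ) else 0) + (1 - w) * Ψ μ' := by
      conv_lhs => rw [hdecomp]
      exact hlin w (1-w) _ _
    rw [hΨ]
    calc |w * Ψ (fun x => if x ∈ S then 1/(s:ℝ) else 0) + (1 - w) * Ψ μ'|
        ≤ |w * Ψ (fun x => if x ∈ S then 1/(s:ℝ) else 0)| + |(1 - w) * Ψ μ'| := abs_add_le _ _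
      _ = w * |Ψ (fun x => if x ∈ S then 1/(s:ℝ) else 0)| + (1 - w) * |Ψ μ'| := by
          rw [abs_mul, abs_mul, abs_of_nonneg hw_pos.le, abs_of_nonneg h1w.le]
      _ ≤ w * C + (1 - w) * C :=
          add_le_add (mul_le_mul_of_nonneg_left (hflat S hScard') hw_pos.le)
            (mul_le_mul_of_nonneg_left hihres h1w.le)
      _ = C := by ring

omit hp4 in
lemma Bform_lin_left (a b : ℝ) (u v g : ZMod p → ℝ) :
    Bform p (fun x => a * u x + b * v x) g = a * Bform p u g + b * Bform p v g := by
  simp only [Bform, Finset.mul_sum, ← Finset.sum_add_distrib]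
  refine Finset.sum_congr rfl fun x _ => Finset.sum_congr rfl fun y _ => ?_
  ring

omit hp4 in
lemma Bform_lin_right (a b : ℝ) (u v g : ZMod p → ℝ) :
    Bform p g (fun x => a * u x + b * v x) = a * Bform p g u + b * Bform p g v := by
  simp only [Bform, Finset.mul_sum, ← Finset.sum_add_distrib]
  refine Finset.sum_congr rfl fun x _ => Finset.sum_congr rfl fun y _ => ?_
  ring

omit hp4 in
lemma flat_eq_indR (s : ℕ) (S : Finset (ZMod p)) :
    (fun x => if x ∈ S then 1/(s:ℝ) else 0) = fun x => (1/(s:ℝ)) * indR p S x := by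
  funext x
  rw [indR]
  split_ifs <;> simp

lemma source_bound (K δ : ℝ) (hδ : 0 ≤ δ) (hRIP : HasRIP (PaleyETF p) K δ)
    (s : ℕ) (hs : 1 ≤ s) (h2s : ((s:ℝ) + (s:ℝ)) ≤ K)
    (μ ν : ZMod p → ℝ)
    (hμ0 : ∀ x, 0 ≤ μ x) (hν0 : ∀ x, 0 ≤ ν x)
    (hμ1 : ∑ x : ZMod p, μ x = 1) (hν1 : ∑ x : ZMod p, ν x = 1)
    (hμs : ∀ x, μ x ≤ 1/(s:ℝ)) (hνs : ∀ x, ν x ≤ 1/(s:ℝ)) :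
    |Bform p μ ν| ≤ δ * Real.sqrt p / s := by
  have hs0 : (0:ℝ) < s := by exact_mod_cast hs
  have hC : 0 ≤ δ * Real.sqrt p / s := by positivity
  have hpair : ∀ S T : Finset (ZMod p), S.card = s → T.card = s →
      |Bform p (fun x => if x ∈ S then 1/(s:ℝ) else 0) (fun x => if x ∈ T then 1/(s:ℝ) else 0)|
        ≤ δ * Real.sqrt p / s := by
    intro S T hS hT
    rw [flat_eq_indR, flat_eq_indR, Bform_bilin]
    have hcard : (((S ∪ T).card : ℕ) : ℝ) ≤ K := by
      refine le_trans ?_ h2s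
      have hn : (S ∪ T).card ≤ s + s :=
        le_trans (Finset.card_union_le S T) (by rw [hS, hT])
      exact_mod_cast hn
    have hpb := pair_bound hp4 K δ hδ hRIP S T hcard
    rw [hS, hT] at hpb
    rw [abs_mul, abs_of_nonneg (by positivity : (0:ℝ) ≤ 1/(s:ℝ) * (1/(s:ℝ)))]
    calc 1/(s:ℝ) * (1/(s:ℝ)) * |Bform p (indR p S) (indR p T)|
        ≤ 1/(s:ℝ) * (1/(s:ℝ)) * (δ * Real.sqrt p * ((s:ℝ) + (s:ℝ)) / 2) := by
          apply mul_le_mul_of_nonneg_left hpb (by positivity)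
      _ = δ * Real.sqrt p / s := by field_simp; ring
  have hstep1 : ∀ S : Finset (ZMod p), S.card = s →
      |Bform p (fun x => if x ∈ S then 1/(s:ℝ) else 0) ν| ≤ δ * Real.sqrt p / s := by
    intro S hS
    exact flat_bound s hs (fun g => Bform p (fun x => if x ∈ S then 1/(s:ℝ) else 0) g)
      (fun a b u v => Bform_lin_right a b u v _) _ (fun T hT => hpair S T hS hT)
      ν hν0 hνs hν1
  exact flat_bound s hs (fun f => Bform p f ν)
    (fun a b u v => Bform_lin_left a b u v ν) _ hstep1 μ hμ0 hμs hμ1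

end PaleyAux


/-- **Corollary: RIP for the Paley ETF makes the Paley extractor break the half barrier.**
Let `ε, τ > 0`, `0 < γ < τ` with `ε ≤ 1/2 − τ + γ`; set `α = 1/2 − τ + γ` and
`β = min(γ, 0.05·ε²)`. Then for all sufficiently large primes `p ≡ 1 (mod 4)`:
if `Φ_p` has the `(p^{1/2+ε}, p^{−τ})`-RIP, then for any two independent sources on `F_p`
with min-entropy at least `α·n`, `n = ⌈log₂ p⌉`, the bias of `Ext_p` is at most
`2·p^{−β} + p^{−α}/2`. Sources are modelled as probability mass functions, and
`Pr[Ext_p(X,Y) = 1] = ∑_{x,y} μ(x)·ν(y)·[Ext_p(x,y) = 1]`. -/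
theorem paley_rip_implies_extractor (ε τ γ : ℝ)
    (hε : 0 < ε) (hτ : 0 < τ) (hγ0 : 0 < γ) (hγτ : γ < τ)
    (hcomp : ε ≤ 1 / 2 - τ + γ) :
    ∃ p₀ : ℕ, ∀ (p : ℕ) [Fact p.Prime], p % 4 = 1 → p₀ ≤ p →
      HasRIP (PaleyETF p) ((p : ℝ) ^ ((1 : ℝ) / 2 + ε)) ((p : ℝ) ^ (-τ)) →
      ∀ μ ν : ZMod p → ℝ,
        (∀ x, 0 ≤ μ x) → (∀ x, 0 ≤ ν x) →
        (∑ x : ZMod p, μ x = 1) → (∑ x : ZMod p, ν x = 1) →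
        (∀ x, μ x ≤ (2 : ℝ) ^ (-(((1 : ℝ) / 2 - τ + γ) * (Nat.clog 2 p : ℝ)))) →
        (∀ x, ν x ≤ (2 : ℝ) ^ (-(((1 : ℝ) / 2 - τ + γ) * (Nat.clog 2 p : ℝ)))) →
        |(∑ x : ZMod p, ∑ y : ZMod p,
            μ x * ν y * (if paleyExt p x y = 1 then (1 : ℝ) else 0)) - 1 / 2| ≤
          2 * (p : ℝ) ^ (-(min γ (0.05 * ε ^ 2))) +
            (p : ℝ) ^ (-((1 : ℝ) / 2 - τ + γ)) / 2 := by
  have hα_pos : 0 < (1:ℝ)/2 - τ + γ := lt_of_lt_of_le hε hcomp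
  have he0_pos : 0 < ε + τ - γ := by linarith
  refine ⟨⌈(4:ℝ) ^ ((ε + τ - γ)⁻¹)⌉₊ + 5, ?_⟩
  intro p _inst hp4 hp₀ hRIP μ ν hμ0 hν0 hμ1 hν1 hμb hνb
  have hp5 : 5 ≤ p := le_trans (Nat.le_add_left 5 _) hp₀
  have hp_posR : (0:ℝ) < p := by positivity
  have hp1R : (1:ℝ) ≤ p := by exact_mod_cast (by omega : 1 ≤ p)
  have h4le : (4:ℝ) ≤ (p:ℝ) ^ (ε + τ - γ) := by
    have hp_ge : ((4:ℝ) ^ ((ε+τ-γ)⁻¹)) ≤ (p:ℝ) := by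
      refine le_trans (Nat.le_ceil _) ?_
      exact_mod_cast (by omega : ⌈(4:ℝ) ^ ((ε + τ - γ)⁻¹)⌉₊ ≤ p)
    calc (4:ℝ) = ((4:ℝ) ^ ((ε+τ-γ)⁻¹)) ^ (ε+τ-γ) := by
          rw [← Real.rpow_mul (by norm_num : (0:ℝ) ≤ 4), inv_mul_cancel₀ he0_pos.ne',
            Real.rpow_one]
      _ ≤ (p:ℝ)^(ε+τ-γ) := Real.rpow_le_rpow (by positivity) hp_ge he0_pos.le
  set n := Nat.clog 2 p with hndef
  have hk0 : 0 ≤ ((1:ℝ)/2 - τ + γ) * (n:ℝ) := mul_nonneg hα_pos.le (Nat.cast_nonneg n)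
  set s := ⌊(2:ℝ) ^ (((1:ℝ)/2 - τ + γ) * (n:ℝ))⌋₊ with hsdef
  have h2k_pos : (0:ℝ) < (2:ℝ) ^ (((1:ℝ)/2 - τ + γ) * (n:ℝ)) := Real.rpow_pos_of_pos (by norm_num) _
  have h2k1 : (1:ℝ) ≤ (2:ℝ) ^ (((1:ℝ)/2 - τ + γ) * (n:ℝ)) := by
    have h := Real.rpow_le_rpow_of_exponent_le (one_le_two (α := ℝ)) hk0
    rwa [Real.rpow_zero] at h
  have hs1 : 1 ≤ s := Nat.le_floor (by exact_mod_cast h2k1)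
  have hs0R : (0:ℝ) < s := by exact_mod_cast hs1
  have hsle : (s:ℝ) ≤ (2:ℝ) ^ (((1:ℝ)/2 - τ + γ) * (n:ℝ)) := Nat.floor_le h2k_pos.le
  have hsge : (2:ℝ) ^ (((1:ℝ)/2 - τ + γ) * (n:ℝ)) ≤ 2*(s:ℝ) := by
    have h1 := Nat.lt_floor_add_one ((2:ℝ) ^ (((1:ℝ)/2 - τ + γ) * (n:ℝ)))
    have h2 : (1:ℝ) ≤ (s:ℝ) := by exact_mod_cast hs1
    rw [← hsdef] at h1
    linarith
  -- p ≤ 2^n and 2^n ≤ 2p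
  have hp_le_2n : (p:ℝ) ≤ (2:ℝ)^(n:ℝ) := by
    rw [Real.rpow_natCast]
    exact_mod_cast Nat.le_pow_clog one_lt_two p
  have h2n_le : (2:ℝ)^(n:ℝ) ≤ 2*(p:ℝ) := by
    rw [Real.rpow_natCast]
    have hpred : 2^(n-1) < p := Nat.pow_pred_clog_lt_self one_lt_two (by omega : 1 < p)
    have hn1 : 0 < n := Nat.clog_pos one_lt_two (by omega : 2 ≤ p)
    have heq : n - 1 + 1 = n := by omega
    have h2 : (2:ℕ)^n ≤ 2*p := by
      calc (2:ℕ)^n = 2^(n-1) * 2 := by rw [← pow_succ, heq]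
        _ ≤ 2 * p := by omega
    exact_mod_cast h2
  have hexp2n : (2:ℝ) ^ (((1:ℝ)/2 - τ + γ) * (n:ℝ)) = ((2:ℝ)^(n:ℝ))^((1:ℝ)/2 - τ + γ) := by
    rw [← Real.rpow_mul (by norm_num : (0:ℝ) ≤ 2), mul_comm]
  have hkey1 : (p:ℝ)^((1:ℝ)/2 - τ + γ) ≤ (2:ℝ) ^ (((1:ℝ)/2 - τ + γ) * (n:ℝ)) := by
    rw [hexp2n]
    exact Real.rpow_le_rpow hp_posR.le hp_le_2n hα_pos.le
  have hkey2 : (2:ℝ) ^ (((1:ℝ)/2 - τ + γ) * (n:ℝ)) ≤ 2 * (p:ℝ)^((1:ℝ)/2 - τ + γ) := by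
    rw [hexp2n]
    calc ((2:ℝ)^(n:ℝ))^((1:ℝ)/2 - τ + γ) ≤ (2*(p:ℝ))^((1:ℝ)/2 - τ + γ) :=
          Real.rpow_le_rpow (Real.rpow_nonneg (by norm_num) _) h2n_le hα_pos.le
      _ = (2:ℝ)^((1:ℝ)/2 - τ + γ) * (p:ℝ)^((1:ℝ)/2 - τ + γ) :=
          Real.mul_rpow (by norm_num) hp_posR.le
      _ ≤ 2 * (p:ℝ)^((1:ℝ)/2 - τ + γ) := by
          have h21 : (2:ℝ)^((1:ℝ)/2 - τ + γ) ≤ (2:ℝ)^(1:ℝ) :=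
            Real.rpow_le_rpow_of_exponent_le one_le_two (by linarith)
          rw [Real.rpow_one] at h21
          exact mul_le_mul_of_nonneg_right h21 (Real.rpow_nonneg hp_posR.le _)
  -- min-entropy gives 1/s bounds
  have hMinv : (2:ℝ) ^ (-(((1:ℝ)/2 - τ + γ) * (n:ℝ))) ≤ 1/(s:ℝ) := by
    rw [Real.rpow_neg (by norm_num : (0:ℝ) ≤ 2),
      show (1:ℝ)/(s:ℝ) = ((s:ℝ))⁻¹ from one_div _]
    exact inv_anti₀ hs0R hsle
  have hμs : ∀ x, μ x ≤ 1/(s:ℝ) := fun x => le_trans (hμb x) hMinv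
  have hνs : ∀ x, ν x ≤ 1/(s:ℝ) := fun x => le_trans (hνb x) hMinv
  -- sparsity bound
  have h2s : (s:ℝ) + (s:ℝ) ≤ (p:ℝ) ^ ((1:ℝ)/2 + ε) := by
    have hstep : (s:ℝ) + (s:ℝ) ≤ 4 * (p:ℝ)^((1:ℝ)/2 - τ + γ) := by
      calc (s:ℝ) + (s:ℝ) = 2 * (s:ℝ) := by ring
        _ ≤ 2 * (2:ℝ) ^ (((1:ℝ)/2 - τ + γ) * (n:ℝ)) := by
            have : (s:ℝ) ≤ (2:ℝ) ^ (((1:ℝ)/2 - τ + γ) * (n:ℝ)) := hsle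
            linarith
        _ ≤ 2 * (2 * (p:ℝ)^((1:ℝ)/2 - τ + γ)) := by linarith [hkey2]
        _ = 4 * (p:ℝ)^((1:ℝ)/2 - τ + γ) := by ring
    have hsplit : (p:ℝ) ^ ((1:ℝ)/2 + ε)
        = (p:ℝ)^((1:ℝ)/2 - τ + γ) * (p:ℝ)^(ε + τ - γ) := by
      rw [← Real.rpow_add hp_posR]
      congr 1
      ring
    calc (s:ℝ) + (s:ℝ) ≤ 4 * (p:ℝ)^((1:ℝ)/2 - τ + γ) := hstep
      _ ≤ (p:ℝ)^((1:ℝ)/2 - τ + γ) * (p:ℝ)^(ε + τ - γ) := by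
          rw [mul_comm (4:ℝ) ((p:ℝ)^((1:ℝ)/2 - τ + γ))]
          exact mul_le_mul_of_nonneg_left h4le (Real.rpow_nonneg hp_posR.le _)
      _ = (p:ℝ) ^ ((1:ℝ)/2 + ε) := hsplit.symm
  have hδ0 : (0:ℝ) ≤ (p:ℝ)^(-τ) := Real.rpow_nonneg hp_posR.le _
  have hB := PaleyAux.source_bound hp4 ((p : ℝ) ^ ((1 : ℝ) / 2 + ε)) ((p : ℝ) ^ (-τ)) hδ0 hRIP
    s hs1 h2s μ ν hμ0 hν0 hμ1 hν1 hμs hνs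
  -- bound the constant
  have hCle : (p:ℝ)^(-τ) * Real.sqrt p / s ≤ 2 * (p:ℝ)^(-γ) := by
    have hsqrt : Real.sqrt p = (p:ℝ)^((1:ℝ)/2) := Real.sqrt_eq_rpow p
    have hsinv : 1/(s:ℝ) ≤ 2 * ((p:ℝ)^((1:ℝ)/2 - τ + γ))⁻¹ := by
      have hps : (p:ℝ)^((1:ℝ)/2 - τ + γ) ≤ 2*(s:ℝ) := le_trans hkey1 hsge
      have hppos : (0:ℝ) < (p:ℝ)^((1:ℝ)/2 - τ + γ) := Real.rpow_pos_of_pos hp_posR _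
      rw [div_le_iff₀ hs0R]
      rw [show 2 * ((p:ℝ)^((1:ℝ)/2 - τ + γ))⁻¹ * (s:ℝ)
          = (2*(s:ℝ)) * ((p:ℝ)^((1:ℝ)/2 - τ + γ))⁻¹ by ring]
      rw [le_mul_inv_iff₀ hppos]
      linarith
    calc (p:ℝ)^(-τ) * Real.sqrt p / s
        = ((p:ℝ)^(-τ) * (p:ℝ)^((1:ℝ)/2)) * (1/(s:ℝ)) := by rw [hsqrt]; ring
      _ ≤ ((p:ℝ)^(-τ) * (p:ℝ)^((1:ℝ)/2)) * (2 * ((p:ℝ)^((1:ℝ)/2 - τ + γ))⁻¹) := by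
          apply mul_le_mul_of_nonneg_left hsinv
          positivity
      _ = 2 * ((p:ℝ)^(-τ) * (p:ℝ)^((1:ℝ)/2) * ((p:ℝ)^((1:ℝ)/2 - τ + γ))⁻¹) := by ring
      _ = 2 * (p:ℝ)^(-γ) := by
          congr 1
          rw [← Real.rpow_add hp_posR, ← Real.rpow_neg hp_posR.le, ← Real.rpow_add hp_posR]
          congr 1
          ring
  have hBfin : |PaleyAux.Bform p μ ν| ≤ 2 * (p:ℝ)^(-γ) := le_trans hB hCle
  -- diagonal term
  have hDle : ∑ x : ZMod p, μ x * ν x ≤ (p:ℝ)^(-((1:ℝ)/2 - τ + γ)) := by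
    have h1 : ∑ x : ZMod p, μ x * ν x
        ≤ ∑ x : ZMod p, μ x * (2 : ℝ) ^ (-(((1:ℝ)/2 - τ + γ) * (n:ℝ))) :=
      Finset.sum_le_sum fun x _ => mul_le_mul_of_nonneg_left (hνb x) (hμ0 x)
    have h2 : ∑ x : ZMod p, μ x * (2 : ℝ) ^ (-(((1:ℝ)/2 - τ + γ) * (n:ℝ)))
        = (2 : ℝ) ^ (-(((1:ℝ)/2 - τ + γ) * (n:ℝ))) := by
      rw [← Finset.sum_mul, hμ1, one_mul]
    have h3 : (2 : ℝ) ^ (-(((1:ℝ)/2 - τ + γ) * (n:ℝ))) ≤ (p:ℝ)^(-((1:ℝ)/2 - τ + γ)) := by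
      rw [Real.rpow_neg (by norm_num : (0:ℝ) ≤ 2), Real.rpow_neg hp_posR.le]
      exact inv_anti₀ (Real.rpow_pos_of_pos hp_posR _) hkey1
    linarith
  have hD0 : 0 ≤ ∑ x : ZMod p, μ x * ν x :=
    Finset.sum_nonneg fun x _ => mul_nonneg (hμ0 x) (hν0 x)
  -- bias identity
  have hpoint : ∀ x y : ZMod p, μ x * ν y * (if paleyExt p x y = 1 then (1:ℝ) else 0)
      = (1/2) * (μ x * ν y) + (1/2) * (μ x * ν y * ((quadChar p (x - y) : ℤ):ℝ))
        + (if y = x then (1/2) * (μ x * ν x) else 0) := by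
    intro x y
    by_cases hxy : x = y
    · subst hxy
      simp [paleyExt, quadChar]
      ring
    · have hne : x - y ≠ 0 := sub_ne_zero.mpr hxy
      have hyx : ¬(y = x) := fun h => hxy h.symm
      rw [paleyExt, if_neg hxy, quadChar, if_neg hne, if_neg hyx, add_zero]
      by_cases hsq : IsSquare (x - y)
      · rw [if_pos hsq, if_pos hsq]
        norm_num
        ring
      · rw [if_neg hsq, if_neg hsq]
        norm_num
  have hE : (∑ x : ZMod p, ∑ y : ZMod p,
        μ x * ν y * (if paleyExt p x y = 1 then (1:ℝ) else 0))
      = 1/2 + (1/2) * PaleyAux.Bform p μ ν + (1/2) * ∑ x : ZMod p, μ x * ν x := by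
    rw [Finset.sum_congr rfl (fun x _ => Finset.sum_congr rfl (fun y _ => hpoint x y))]
    have hx : ∀ x : ZMod p,
        (∑ y : ZMod p, ((1/2) * (μ x * ν y) + (1/2) * (μ x * ν y * ((quadChar p (x - y) : ℤ):ℝ))
          + (if y = x then (1/2) * (μ x * ν x) else 0)))
        = (1/2) * μ x + (∑ y : ZMod p, (1/2) * (μ x * ν y * ((quadChar p (x - y) : ℤ):ℝ)))
          + (1/2) * (μ x * ν x) := by
      intro x
      rw [Finset.sum_add_distrib, Finset.sum_add_distrib]
      congr 1
      · congr 1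
        have : ∀ y : ZMod p, (1/2) * (μ x * ν y) = ((1/2) * μ x) * ν y := fun y => by ring
        rw [Finset.sum_congr rfl (fun y _ => this y), ← Finset.mul_sum, hν1, mul_one]
      · rw [Finset.sum_ite_eq' Finset.univ x (fun _ => (1/2) * (μ x * ν x)),
          if_pos (Finset.mem_univ x)]
    rw [Finset.sum_congr rfl (fun x _ => hx x)]
    rw [Finset.sum_add_distrib, Finset.sum_add_distrib]
    congr 1
    · congr 1
      · rw [← Finset.mul_sum, hμ1, mul_one]
      · rw [PaleyAux.Bform, Finset.mul_sum]
        refine Finset.sum_congr rfl fun x _ => ?_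
        rw [Finset.mul_sum]
    · rw [Finset.mul_sum]
  rw [hE]
  have hstep : |1/2 + (1/2) * PaleyAux.Bform p μ ν + (1/2) * ∑ x : ZMod p, μ x * ν x - 1/2|
      ≤ (1/2) * |PaleyAux.Bform p μ ν| + (1/2) * ∑ x : ZMod p, μ x * ν x := by
    rw [show (1/2 + (1/2) * PaleyAux.Bform p μ ν + (1/2) * ∑ x : ZMod p, μ x * ν x - 1/2)
        = (1/2) * PaleyAux.Bform p μ ν + (1/2) * ∑ x : ZMod p, μ x * ν x by ring]
    refine le_trans (abs_add_le _ _) ?_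
    rw [abs_mul, abs_of_nonneg (by norm_num : (0:ℝ) ≤ 1/2),
      abs_mul, abs_of_nonneg (by norm_num : (0:ℝ) ≤ 1/2), abs_of_nonneg hD0]
  refine le_trans hstep ?_
  have hβγ : (p:ℝ)^(-γ) ≤ (p:ℝ)^(-(min γ (0.05 * ε ^ 2))) := by
    apply Real.rpow_le_rpow_of_exponent_le hp1R
    have : min γ (0.05 * ε ^ 2) ≤ γ := min_le_left _ _
    linarith
  have hβ_pos : (0:ℝ) < (p:ℝ)^(-(min γ (0.05 * ε ^ 2))) := Real.rpow_pos_of_pos hp_posR _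
  calc (1/2) * |PaleyAux.Bform p μ ν| + (1/2) * ∑ x : ZMod p, μ x * ν x
      ≤ (1/2) * (2 * (p:ℝ)^(-γ)) + (1/2) * (p:ℝ)^(-((1:ℝ)/2 - τ + γ)) := by
        apply add_le_add
        · exact mul_le_mul_of_nonneg_left hBfin (by norm_num)
        · exact mul_le_mul_of_nonneg_left hDle (by norm_num)
    _ = (p:ℝ)^(-γ) + (p:ℝ)^(-((1:ℝ)/2 - τ + γ))/2 := by ring
    _ ≤ 2 * (p : ℝ) ^ (-(min γ (0.05 * ε ^ 2))) + (p : ℝ) ^ (-((1 : ℝ) / 2 - τ + γ)) / 2 := by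
        have : (p:ℝ)^(-γ) ≤ 2 * (p:ℝ)^(-(min γ (0.05 * ε ^ 2))) := by linarith
        linarith
end
end

section
/- Suppose there exists a constant C > 0 such that for every prime p ≡ 1 (mod 4) and every integer K with 2 ≤ K ≤ p + 1, the Paley ETF Φ_p has the (K, δ)-RIP with δ = C·√(K/p)·(log K)·(log p). Then for every α > 0 there exists p₀ such that for every prime p ≥ p₀ with p ≡ 1 (mod 4), every clique of the Paley graph G_p has size at most p^α. -/
open scoped Classical
open Finset

noncomputable section

-- auxiliary development

lemma addChar'_eq_std (p : ℕ) [NeZero p] (x : ZMod p) :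
    addChar' p x = ZMod.stdAddChar x := by
  have h := ZMod.stdAddChar_coe (N := p) (x.val : ℤ)
  have h2 : (((x.val : ℤ) : ZMod p)) = x := by push_cast; exact ZMod.natCast_zmod_val x
  rw [h2] at h
  rw [h, addChar']
  norm_cast

/-- The quadratic character with values in ℂ. -/
def chiC (p : ℕ) [Fact p.Prime] : MulChar (ZMod p) ℂ :=
  (quadraticChar (ZMod p)).ringHomComp (Int.castRingHom ℂ)

section Main
variable (p : ℕ) [Fact p.Prime]

lemma chiC_apply (a : ZMod p) :
    chiC p a = if a = 0 then 0 else if IsSquare a then 1 else -1 := by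
  simp only [chiC, MulChar.ringHomComp_apply, quadraticChar_apply, quadraticCharFun]
  split_ifs <;> simp

lemma sum_helper (w : ZMod p → ℂ) :
    ∑ a : ZMod p, (chiC p a + 1) * w a = 2 * ∑ b : QRes p, w b.1 + w 0 := by
  have key : ∀ a : ZMod p, (chiC p a + 1) * w a
      = (if a ≠ 0 ∧ IsSquare a then 2 * w a else 0) + (if a = 0 then w 0 else 0) := by
    intro a
    by_cases h0 : a = 0
    · subst h0; simp [chiC_apply]
    · by_cases hsq : IsSquare a
      · rw [chiC_apply, if_neg h0, if_pos hsq, if_pos (⟨h0, hsq⟩ : a ≠ 0 ∧ IsSquare a),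
          if_neg h0]; ring
      · rw [chiC_apply, if_neg h0, if_neg hsq, if_neg (by tauto : ¬(a ≠ 0 ∧ IsSquare a)),
          if_neg h0]; ring
  rw [Finset.sum_congr rfl fun a _ => key a, Finset.sum_add_distrib]
  have h1 : ∑ a : ZMod p, (if a = 0 then w 0 else 0) = w 0 := by
    rw [Finset.sum_ite_eq' Finset.univ (0 : ZMod p) (fun _ => w 0)]
    simp
  have h2 : ∑ a : ZMod p, (if a ≠ 0 ∧ IsSquare a then 2 * w a else 0)
      = 2 * ∑ b : QRes p, w b.1 := by
    rw [← Finset.sum_filter, ← Finset.mul_sum]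
    congr 1
    exact Finset.sum_subtype _ (by simp) w
  rw [h1, h2]

lemma psi_ne_zero : (ZMod.stdAddChar (N := p)) ≠ 0 := by
  intro h
  have h1 : ZMod.stdAddChar (1 : ZMod p) = ZMod.stdAddChar (0 : ZMod p) := by
    rw [h]; rfl
  have := ZMod.injective_stdAddChar (N := p) h1
  have hp := (Fact.out : p.Prime).one_lt
  exact (one_ne_zero (α := ZMod p)) this

lemma gauss_eq :
    gaussSum (chiC p) (ZMod.stdAddChar (N := p))
      = 2 * (∑ b : QRes p, ZMod.stdAddChar b.1) + 1 := by
  have h0 : ∑ a : ZMod p, ZMod.stdAddChar a = 0 :=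
    AddChar.sum_eq_zero_iff_ne_zero.mpr (psi_ne_zero p)
  have := sum_helper p (fun a => ZMod.stdAddChar a)
  simp only [add_mul, one_mul] at this
  rw [Finset.sum_add_distrib, h0, add_zero] at this
  rw [gaussSum, this, AddChar.map_zero_eq_one]

lemma ringChar_ne_two (hp4 : p % 4 = 1) : ringChar (ZMod p) ≠ 2 := by
  rw [ZMod.ringChar_zmod_n]; omega

lemma chiC_sum_zero (hp4 : p % 4 = 1) : ∑ a : ZMod p, chiC p a = 0 := by
  have h := quadraticChar_sum_zero (F := ZMod p) (ringChar_ne_two p hp4)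
  have h2 : ((∑ a : ZMod p, quadraticChar (ZMod p) a : ℤ) : ℂ) = 0 := by rw [h]; norm_num
  rw [← h2]
  push_cast
  exact Finset.sum_congr rfl fun a _ => by simp [chiC, MulChar.ringHomComp_apply]

lemma card_eq (hp4 : p % 4 = 1) : (p : ℂ) = 2 * (Fintype.card (QRes p) : ℂ) + 1 := by
  have hs := sum_helper p (fun _ => (1 : ℂ))
  simp only [mul_one] at hs
  rw [Finset.sum_add_distrib, chiC_sum_zero p hp4, zero_add, Finset.sum_const,
    Finset.card_univ, ZMod.card, Finset.sum_const, Finset.card_univ] at hs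
  simpa [nsmul_eq_mul] using hs

lemma chiC_ne_one (hp4 : p % 4 = 1) : chiC p ≠ 1 := by
  refine (MulChar.ringHomComp_ne_one_iff ?_).mpr (quadraticChar_ne_one (ringChar_ne_two p hp4))
  intro a b hab
  simp only [Int.coe_castRingHom] at hab
  exact_mod_cast hab

lemma gauss_sq (hp4 : p % 4 = 1) :
    gaussSum (chiC p) (ZMod.stdAddChar (N := p)) ^ 2 = (p : ℂ) := by
  have hq : (chiC p).IsQuadratic := (quadraticChar_isQuadratic (ZMod p)).comp _
  have hprim := ZMod.isPrimitive_stdAddChar p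
  rw [gaussSum_sq (chiC_ne_one p hp4) hq hprim]
  have hsq : IsSquare (-1 : ZMod p) := (ZMod.exists_sq_eq_neg_one_iff).mpr (by omega)
  have hne : (-1 : ZMod p) ≠ 0 := by
    intro h
    have := (Fact.out : p.Prime).one_lt
    simp only [neg_eq_zero] at h
    exact (one_ne_zero (α := ZMod p)) h
  rw [chiC_apply, if_neg hne, if_pos hsq, one_mul, ZMod.card]

lemma conj_psi (x : ZMod p) :
    (starRingEnd ℂ) (ZMod.stdAddChar x) = ZMod.stdAddChar (-x) := by
  have habs : ‖(ZMod.stdAddChar x : ℂ)‖ = 1 := by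
    rw [ZMod.stdAddChar_apply]; exact Circle.norm_coe _
  have hne : (ZMod.stdAddChar x : ℂ) ≠ 0 := by
    intro h; rw [h] at habs; simp at habs
  have h1 : ZMod.stdAddChar (-x) * ZMod.stdAddChar x = 1 := by
    rw [← AddChar.map_add_eq_mul, neg_add_cancel, AddChar.map_zero_eq_one]
  have h2 : (starRingEnd ℂ) (ZMod.stdAddChar x) * ZMod.stdAddChar x = 1 := by
    rw [mul_comm, Complex.mul_conj, Complex.normSq_eq_norm_sq, habs]; norm_num
  exact mul_right_cancel₀ hne (h2.trans h1.symm)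


/-- Multiplication by a nonzero square permutes the quadratic residues. -/
def qresMulEquiv (c : ZMod p) (hc : c ≠ 0) (hcs : IsSquare c) : QRes p ≃ QRes p where
  toFun b := ⟨b.1 * c, mul_ne_zero b.2.1 hc, b.2.2.mul hcs⟩
  invFun b := ⟨b.1 * c⁻¹, mul_ne_zero b.2.1 (inv_ne_zero hc), b.2.2.mul hcs.inv⟩
  left_inv b := Subtype.ext (by simp [mul_assoc, mul_inv_cancel₀ hc])
  right_inv b := Subtype.ext (by simp [mul_assoc, inv_mul_cancel₀ hc])

lemma total_eq (hp4 : p % 4 = 1) (S : Finset (ZMod p))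
    (hS : ∀ x ∈ S, ∀ y ∈ S, x ≠ y → IsSquare (x - y)) :
    ((∑ m, ‖∑ n, PaleyETF p m n * indic p S n‖ ^ 2 : ℝ) : ℂ)
      = (S.card : ℂ) + (S.card : ℂ) * ((S.card : ℂ) - 1)
          * gaussSum (chiC p) (ZMod.stdAddChar (N := p)) / (p : ℂ) := by
  have hp := (Fact.out : p.Prime)
  have hppos : (0:ℝ) < p := by exact_mod_cast hp.pos
  have hp0 : (p:ℂ) ≠ 0 := Nat.cast_ne_zero.mpr hp.pos.ne'
  set z : Option (QRes p) → ℂ := fun m => ∑ n, PaleyETF p m n * indic p S n with hzdef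
  set G : ℂ := ∑ b : QRes p, ZMod.stdAddChar b.1 with hGdef
  have hind1 : ∀ a, indic p S (some a) = if a ∈ S then 1 else 0 := fun a => rfl
  have hzsum : ∀ m, z m = ∑ a ∈ S, PaleyETF p m (some a) := by
    intro m
    show (∑ n : Option (ZMod p), PaleyETF p m n * indic p S n) = _
    rw [Fintype.sum_option]
    have h0 : PaleyETF p m none * indic p S none = 0 := by
      rw [show indic p S none = 0 from rfl, mul_zero]
    rw [h0, zero_add]
    rw [Finset.sum_congr rfl fun a _ => by
      rw [hind1 a, mul_ite, mul_one, mul_zero]]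
    rw [Finset.sum_ite_mem, Finset.univ_inter]
  have hznone : z none = (S.card : ℂ) * ((1 / Real.sqrt p : ℝ) : ℂ) := by
    rw [hzsum none,
      show (∑ a ∈ S, PaleyETF p none (some a)) = ∑ _a ∈ S, ((1 / Real.sqrt p : ℝ) : ℂ) from
        Finset.sum_congr rfl fun a _ => rfl,
      Finset.sum_const, nsmul_eq_mul]
  have hzsome : ∀ b : QRes p,
      z (some b) = ((Real.sqrt (2/(p:ℝ)) : ℝ) : ℂ) * ∑ a ∈ S, ZMod.stdAddChar (b.1 * a) := by
    intro b
    rw [hzsum (some b), Finset.mul_sum]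
    refine Finset.sum_congr rfl fun a _ => ?_
    rw [show PaleyETF p (some b) (some a)
        = ((Real.sqrt (2/(p:ℝ)) : ℝ) : ℂ) * addChar' p (b.1 * a) from rfl,
      addChar'_eq_std]
  have hnorm : ∀ w : ℂ, ((‖w‖ : ℝ) : ℂ)^2 = w * (starRingEnd ℂ) w := by
    intro w
    rw [← Complex.ofReal_pow, Complex.mul_conj]
    norm_cast
    simp [Complex.normSq_eq_norm_sq]
  have hcast : ((∑ m, ‖z m‖ ^ 2 : ℝ) : ℂ) = ∑ m, z m * (starRingEnd ℂ) (z m) := by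
    push_cast
    exact Finset.sum_congr rfl fun m _ => hnorm (z m)
  rw [hcast, Fintype.sum_option]
  have hnone : z none * (starRingEnd ℂ) (z none) = (S.card:ℂ)^2 * (1/(p:ℂ)) := by
    have hc : ((1 / Real.sqrt p : ℝ) : ℂ) * ((1 / Real.sqrt p : ℝ) : ℂ) = 1/(p:ℂ) := by
      rw [← Complex.ofReal_mul, div_mul_div_comm, one_mul, Real.mul_self_sqrt hppos.le]
      push_cast
      ring
    rw [hznone, map_mul, Complex.conj_ofReal, map_natCast]
    calc ((S.card:ℂ) * ((1 / Real.sqrt p : ℝ) : ℂ)) * ((S.card:ℂ) * ((1 / Real.sqrt p : ℝ) : ℂ))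
        = (S.card:ℂ)^2 * (((1 / Real.sqrt p : ℝ) : ℂ) * ((1 / Real.sqrt p : ℝ) : ℂ)) := by ring
      _ = (S.card:ℂ)^2 * (1/(p:ℂ)) := by rw [hc]
  have hsome : ∑ b : QRes p, z (some b) * (starRingEnd ℂ) (z (some b))
      = (2/(p:ℂ)) * ∑ a ∈ S, ∑ a' ∈ S, ∑ b : QRes p, ZMod.stdAddChar (b.1 * (a - a')) := by
    have h2p : ((Real.sqrt (2/(p:ℝ)) : ℝ) : ℂ) * ((Real.sqrt (2/(p:ℝ)) : ℝ) : ℂ) = 2/(p:ℂ) := by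
      rw [← Complex.ofReal_mul, Real.mul_self_sqrt (by positivity)]
      push_cast
      ring
    have step : ∀ b : QRes p, z (some b) * (starRingEnd ℂ) (z (some b))
        = (2/(p:ℂ)) * ∑ a ∈ S, ∑ a' ∈ S, ZMod.stdAddChar (b.1 * (a - a')) := by
      intro b
      rw [hzsome b, map_mul, Complex.conj_ofReal, map_sum]
      rw [Finset.sum_congr rfl fun a' (_ : a' ∈ S) => conj_psi p (b.1 * a')]
      rw [mul_mul_mul_comm, h2p, Finset.sum_mul_sum]
      congr 1
      refine Finset.sum_congr rfl fun a _ => Finset.sum_congr rfl fun a' _ => ?_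
      rw [← AddChar.map_add_eq_mul]
      congr 1
      ring
    rw [Finset.sum_congr rfl fun b _ => step b, ← Finset.mul_sum]
    congr 1
    rw [Finset.sum_comm]
    exact Finset.sum_congr rfl fun a _ => Finset.sum_comm
  have hinner : ∀ a ∈ S, ∀ a' ∈ S, (∑ b : QRes p, ZMod.stdAddChar (b.1 * (a - a')))
      = if a' = a then (Fintype.card (QRes p) : ℂ) else G := by
    intro a ha a' ha'
    by_cases hE : a' = a
    · rw [if_pos hE, hE]
      rw [Finset.sum_congr rfl fun b _ => by
        rw [sub_self, mul_zero, AddChar.map_zero_eq_one]]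
      rw [Finset.sum_const, Finset.card_univ, nsmul_eq_mul, mul_one]
    · rw [if_neg hE]
      have hc : a - a' ≠ 0 := sub_ne_zero_of_ne (fun h => hE h.symm)
      have hcs : IsSquare (a - a') := hS a ha a' ha' (fun h => hE h.symm)
      exact Fintype.sum_equiv (qresMulEquiv p (a - a') hc hcs) _ _ (fun b => rfl)
  rw [hnone, hsome]
  rw [Finset.sum_congr rfl fun a ha => Finset.sum_congr rfl fun a' ha' => hinner a ha a' ha']
  have hQG : ∑ a ∈ S, ∑ a' ∈ S, (if a' = a then (Fintype.card (QRes p):ℂ) else G)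
      = (S.card:ℂ) * ((S.card:ℂ) * G + ((Fintype.card (QRes p):ℂ) - G)) := by
    have hrow : ∀ a ∈ S, ∑ a' ∈ S, (if a' = a then (Fintype.card (QRes p):ℂ) else G)
        = (S.card:ℂ) * G + ((Fintype.card (QRes p):ℂ) - G) := by
      intro a ha
      have hsplit : ∀ a' : ZMod p, (if a' = a then (Fintype.card (QRes p):ℂ) else G)
          = G + (if a' = a then (Fintype.card (QRes p):ℂ) - G else 0) := by
        intro a'; split_ifs <;> ring
      rw [Finset.sum_congr rfl fun a' _ => hsplit a', Finset.sum_add_distrib,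
        Finset.sum_const, Finset.sum_ite_eq' S a (fun _ => (Fintype.card (QRes p):ℂ) - G),
        if_pos ha, nsmul_eq_mul]
    rw [Finset.sum_congr rfl hrow, Finset.sum_const, nsmul_eq_mul]
  rw [hQG]
  have hg := gauss_eq p
  rw [← hGdef] at hg
  have hc := card_eq p hp4
  have hQval : (Fintype.card (QRes p) : ℂ) = ((p:ℂ) - 1)/2 := by
    linear_combination (-1/2 : ℂ) * hc
  rw [hg, hQval]
  field_simp
  ring


lemma indic_support (S : Finset (ZMod p)) :
    (Finset.univ.filter fun n => indic p S n ≠ 0).card = S.card := by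
  have he : (Finset.univ.filter fun n => indic p S n ≠ 0) = S.image some := by
    ext n
    match n with
    | none =>
      simp [show indic p S none = 0 from rfl]
    | some a =>
      by_cases ha : a ∈ S <;>
        simp [show indic p S (some a) = if a ∈ S then 1 else 0 from rfl, ha]
  rw [he, Finset.card_image_of_injective _ (Option.some_injective _)]

lemma indic_sumsq (S : Finset (ZMod p)) :
    ∑ n, ‖indic p S n‖ ^ 2 = (S.card : ℝ) := by
  rw [Fintype.sum_option]
  rw [show indic p S none = 0 from rfl]
  have hterm : ∀ a : ZMod p, ‖indic p S (some a)‖^2 = if a ∈ S then (1:ℝ) else 0 := by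
    intro a
    by_cases ha : a ∈ S <;>
      simp [show indic p S (some a) = if a ∈ S then 1 else 0 from rfl, ha]
  rw [Finset.sum_congr rfl fun a _ => hterm a, Finset.sum_ite_mem, Finset.univ_inter,
    Finset.sum_const, nsmul_eq_mul, mul_one]
  simp

/-- Key consequence of the RIP for a clique indicator: `K - 1 ≤ δ √p`. -/
lemma clique_key (hp4 : p % 4 = 1) (S : Finset (ZMod p))
    (hS : ∀ x ∈ S, ∀ y ∈ S, x ≠ y → IsSquare (x - y)) {δ : ℝ}
    (hrip : HasRIP (PaleyETF p) (S.card : ℝ) δ) (hK2 : 2 ≤ S.card) :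
    ((S.card : ℝ) - 1) ≤ δ * Real.sqrt p := by
  have hp := (Fact.out : p.Prime)
  have hppos : (0:ℝ) < p := by exact_mod_cast hp.pos
  have hsp : (0:ℝ) < Real.sqrt p := Real.sqrt_pos.mpr hppos
  have hsq : Real.sqrt p * Real.sqrt p = (p:ℝ) := Real.mul_self_sqrt hppos.le
  have hKpos : (0:ℝ) < (S.card : ℝ) := by
    have : (0:ℕ) < S.card := by omega
    exact_mod_cast this
  obtain ⟨h1, h2⟩ := hrip (indic p S) (le_of_eq (by rw [indic_support]))
  rw [indic_sumsq] at h1 h2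
  -- the Gauss sum is ± √p
  have hgs := gauss_sq p hp4
  have hcases : gaussSum (chiC p) (ZMod.stdAddChar (N := p)) = ((Real.sqrt p : ℝ) : ℂ)
      ∨ gaussSum (chiC p) (ZMod.stdAddChar (N := p)) = -((Real.sqrt p : ℝ) : ℂ) := by
    have hzero : (gaussSum (chiC p) (ZMod.stdAddChar (N := p)) - ((Real.sqrt p : ℝ) : ℂ))
        * (gaussSum (chiC p) (ZMod.stdAddChar (N := p)) + ((Real.sqrt p : ℝ) : ℂ)) = 0 := by
      have hsqC : (((Real.sqrt p : ℝ) : ℂ))^2 = (p:ℂ) := by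
        rw [← Complex.ofReal_pow, Real.sq_sqrt hppos.le]
        norm_cast
      linear_combination hgs - hsqC
    rcases mul_eq_zero.mp hzero with h | h
    · exact Or.inl (sub_eq_zero.mp h)
    · exact Or.inr (eq_neg_of_add_eq_zero_left h)
  have htot := total_eq p hp4 S hS
  rcases hcases with hg | hg
  · -- Gauss sum = +√p : use the upper RIP bound
    have hT : (∑ m, ‖∑ n, PaleyETF p m n * indic p S n‖ ^ 2 : ℝ)
        = (S.card:ℝ) + (S.card:ℝ) * ((S.card:ℝ) - 1) * Real.sqrt p / p := by
      apply Complex.ofReal_injective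
      rw [htot, hg]
      push_cast
      ring
    rw [hT] at h2
    -- (K + K(K-1)√p/p) ≤ (1+δ)K  ⟹  K-1 ≤ δ√p
    have h3 : (S.card:ℝ) * ((S.card:ℝ) - 1) * Real.sqrt p ≤ δ * (S.card:ℝ) * p := by
      have := sub_le_sub_right h2 (S.card:ℝ)
      have h4 : (S.card:ℝ) * ((S.card:ℝ) - 1) * Real.sqrt p / p ≤ δ * (S.card:ℝ) := by
        nlinarith [this]
      calc (S.card:ℝ) * ((S.card:ℝ) - 1) * Real.sqrt p
          = ((S.card:ℝ) * ((S.card:ℝ) - 1) * Real.sqrt p / p) * p := by field_simp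
        _ ≤ (δ * (S.card:ℝ)) * p := by
            exact mul_le_mul_of_nonneg_right h4 hppos.le
        _ = δ * (S.card:ℝ) * p := by ring
    have h5 : ((S.card:ℝ) - 1) * ((S.card:ℝ) * Real.sqrt p)
        ≤ (δ * Real.sqrt p) * ((S.card:ℝ) * Real.sqrt p) := by nlinarith [h3]
    exact le_of_mul_le_mul_right h5 (by positivity)
  · -- Gauss sum = -√p : use the lower RIP bound
    have hT : (∑ m, ‖∑ n, PaleyETF p m n * indic p S n‖ ^ 2 : ℝ)
        = (S.card:ℝ) - (S.card:ℝ) * ((S.card:ℝ) - 1) * Real.sqrt p / p := by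
      apply Complex.ofReal_injective
      rw [htot, hg]
      push_cast
      ring
    rw [hT] at h1
    have h3 : (S.card:ℝ) * ((S.card:ℝ) - 1) * Real.sqrt p ≤ δ * (S.card:ℝ) * p := by
      have h4 : (S.card:ℝ) * ((S.card:ℝ) - 1) * Real.sqrt p / p ≤ δ * (S.card:ℝ) := by
        nlinarith [h1]
      calc (S.card:ℝ) * ((S.card:ℝ) - 1) * Real.sqrt p
          = ((S.card:ℝ) * ((S.card:ℝ) - 1) * Real.sqrt p / p) * p := by field_simp
        _ ≤ (δ * (S.card:ℝ)) * p := by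
            exact mul_le_mul_of_nonneg_right h4 hppos.le
        _ = δ * (S.card:ℝ) * p := by ring
    have h5 : ((S.card:ℝ) - 1) * ((S.card:ℝ) * Real.sqrt p)
        ≤ (δ * Real.sqrt p) * ((S.card:ℝ) * Real.sqrt p) := by nlinarith [h3]
    exact le_of_mul_le_mul_right h5 (by positivity)

end Main


/-- **The conjectured RIP constant implies subpolynomial Paley clique numbers.**
Suppose there is `C > 0` such that for every prime `p ≡ 1 (mod 4)` and every
`2 ≤ K ≤ p + 1`, the Paley ETF has the `(K, C·√(K/p)·log K·log p)`-RIP. Then for every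
`α > 0` there is `p₀` such that for all primes `p ≥ p₀` with `p ≡ 1 (mod 4)`, every
clique of the Paley graph `G_p` has size at most `p^α`. A clique is a set of pairwise
adjacent vertices, adjacency being `x ≠ y` and `x − y` a nonzero square. -/
theorem paley_rip_conjecture_implies_clique_bound
    (h : ∃ C : ℝ, 0 < C ∧ ∀ (p : ℕ) [Fact p.Prime], p % 4 = 1 →
      ∀ K : ℕ, 2 ≤ K → K ≤ p + 1 →
        HasRIP (PaleyETF p) (K : ℝ)
          (C * Real.sqrt ((K : ℝ) / (p : ℝ)) * Real.log K * Real.log p)) :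
    ∀ α : ℝ, 0 < α →
      ∃ p₀ : ℕ, ∀ p : ℕ, p.Prime → p % 4 = 1 → p₀ ≤ p →
        ∀ S : Finset (ZMod p), (∀ x ∈ S, ∀ y ∈ S, x ≠ y → IsSquare (x - y)) →
          (S.card : ℝ) ≤ (p : ℝ) ^ α := by
  obtain ⟨C, hC, hRIP⟩ := h
  intro α hα
  set M : ℝ := (64 * C / α)^4 with hM
  refine ⟨⌈M ^ ((2:ℝ)/α)⌉₊ + 2, ?_⟩
  intro p hp hp4 hpge S hS
  haveI : Fact p.Prime := ⟨hp⟩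
  have hppos : (0:ℝ) < p := by exact_mod_cast hp.pos
  have hp1 : (1:ℝ) ≤ p := by exact_mod_cast hp.one_lt.le
  have hpα1 : (1:ℝ) ≤ (p:ℝ) ^ α := by
    calc (1:ℝ) = (p:ℝ)^(0:ℝ) := (Real.rpow_zero _).symm
    _ ≤ (p:ℝ)^α := Real.rpow_le_rpow_of_exponent_le hp1 hα.le
  by_cases hK2 : 2 ≤ S.card
  · -- main case
    have hKle : S.card ≤ p + 1 := by
      have h1 := Finset.card_le_univ S
      rw [ZMod.card] at h1
      omega
    have hrip := hRIP p hp4 S.card hK2 hKle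
    have hkey := clique_key p hp4 S hS hrip hK2
    set Kr : ℝ := (S.card : ℝ) with hKr
    set L : ℝ := Real.log p with hL
    have hKr2 : (2:ℝ) ≤ Kr := by rw [hKr]; exact_mod_cast hK2
    have hKrpos : (0:ℝ) < Kr := by linarith
    have hsp : (0:ℝ) < Real.sqrt p := Real.sqrt_pos.mpr hppos
    have hLpos : (0:ℝ) < L := Real.log_pos (by exact_mod_cast hp.one_lt)
    have hδ : (C * Real.sqrt (Kr / p) * Real.log Kr * L) * Real.sqrt p
        = C * Real.sqrt Kr * Real.log Kr * L := by
      rw [Real.sqrt_div hKrpos.le]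
      field_simp
    rw [hδ] at hkey
    have hlogK : Real.log Kr ≤ 4 * Kr^((1:ℝ)/4) := by
      have h1 : Real.log Kr = 4 * Real.log (Kr^((1:ℝ)/4)) := by
        rw [Real.log_rpow hKrpos]; ring
      have h2 : Real.log (Kr^((1:ℝ)/4)) ≤ Kr^((1:ℝ)/4) := by
        have := Real.log_le_sub_one_of_pos (x := Kr^((1:ℝ)/4)) (by positivity)
        linarith
      linarith
    have hlogKpos : (0:ℝ) ≤ Real.log Kr := Real.log_nonneg (by linarith)
    have hr : Kr^((1:ℝ)/2) * Kr^((1:ℝ)/4) = Kr^((3:ℝ)/4) := by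
      rw [← Real.rpow_add hKrpos]; norm_num
    have hb : Kr - 1 ≤ C * Kr^((1:ℝ)/2) * (4*Kr^((1:ℝ)/4)) * L := by
      calc Kr - 1 ≤ C * Real.sqrt Kr * Real.log Kr * L := hkey
      _ = C * Kr^((1:ℝ)/2) * Real.log Kr * L := by rw [Real.sqrt_eq_rpow]
      _ ≤ C * Kr^((1:ℝ)/2) * (4*Kr^((1:ℝ)/4)) * L := by gcongr
    have hhalf : Kr/2 ≤ Kr - 1 := by linarith
    have hstep : Kr ≤ 8*C*L*Kr^((3:ℝ)/4) := by
      calc Kr = 2 * (Kr/2) := by ring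
      _ ≤ 2 * (C * Kr^((1:ℝ)/2) * (4*Kr^((1:ℝ)/4)) * L) := by
          have h6 := hhalf.trans hb
          linarith
      _ = 8*C*L*(Kr^((1:ℝ)/2) * Kr^((1:ℝ)/4)) := by ring
      _ = 8*C*L*Kr^((3:ℝ)/4) := by rw [hr]
    have h34 : (0:ℝ) < Kr^((3:ℝ)/4) := by positivity
    have hq : Kr^((1:ℝ)/4) ≤ 8*C*L := by
      have hKid : Kr^((1:ℝ)/4) * Kr^((3:ℝ)/4) = Kr := by
        rw [← Real.rpow_add hKrpos]; norm_num
      refine le_of_mul_le_mul_right ?_ h34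
      rw [hKid]
      calc Kr ≤ 8*C*L*Kr^((3:ℝ)/4) := hstep
      _ = (8*C*L) * Kr^((3:ℝ)/4) := by ring
    have hK4 : Kr ≤ (8*C*L)^4 := by
      have hx : (Kr^((1:ℝ)/4))^(4:ℕ) = Kr := by
        rw [← Real.rpow_natCast (Kr^((1:ℝ)/4)) 4, ← Real.rpow_mul hKrpos.le]
        norm_num
      calc Kr = (Kr^((1:ℝ)/4))^(4:ℕ) := hx.symm
      _ ≤ (8*C*L)^(4:ℕ) := pow_le_pow_left₀ (by positivity) hq 4
    have hLb : L ≤ (8/α) * (p:ℝ)^(α/8) := by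
      have h1 : L = (8/α) * Real.log ((p:ℝ)^(α/8)) := by
        rw [Real.log_rpow hppos, hL]
        field_simp
      have h2 : Real.log ((p:ℝ)^(α/8)) ≤ (p:ℝ)^(α/8) := by
        have := Real.log_le_sub_one_of_pos (x := (p:ℝ)^(α/8)) (by positivity)
        linarith
      calc L = (8/α) * Real.log ((p:ℝ)^(α/8)) := h1
      _ ≤ (8/α) * (p:ℝ)^(α/8) := mul_le_mul_of_nonneg_left h2 (by positivity)
    have hM4 : (8*C*L)^4 ≤ M * ((p:ℝ)^(α/8))^(4:ℕ) := by
      have hb2 : 8*C*L ≤ (64*C/α) * (p:ℝ)^(α/8) := by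
        have he : (64*C/α) * (p:ℝ)^(α/8) = 8*C*((8/α) * (p:ℝ)^(α/8)) := by ring
        rw [he]
        exact mul_le_mul_of_nonneg_left hLb (by positivity)
      have h4 := pow_le_pow_left₀ (by positivity : (0:ℝ) ≤ 8*C*L) hb2 4
      calc (8*C*L)^4 ≤ ((64*C/α) * (p:ℝ)^(α/8))^(4:ℕ) := h4
      _ = M * ((p:ℝ)^(α/8))^(4:ℕ) := by rw [mul_pow, ← hM]
    have hp8 : ((p:ℝ)^(α/8))^(4:ℕ) = (p:ℝ)^(α/2) := by
      rw [← Real.rpow_natCast ((p:ℝ)^(α/8)) 4, ← Real.rpow_mul hppos.le]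
      congr 1
      push_cast
      ring
    have hMnn : (0:ℝ) ≤ M := by rw [hM]; positivity
    have hMle : M ≤ (p:ℝ)^(α/2) := by
      have hple : M^((2:ℝ)/α) ≤ (p:ℝ) := by
        have h1 : M^((2:ℝ)/α) ≤ (⌈M^((2:ℝ)/α)⌉₊ : ℝ) := Nat.le_ceil _
        have h2 : (⌈M^((2:ℝ)/α)⌉₊ : ℝ) ≤ (p:ℝ) := by
          have : ⌈M^((2:ℝ)/α)⌉₊ ≤ p := by omega
          exact_mod_cast this
        linarith
      have he : ((2:ℝ)/α) * (α/2) = 1 := by field_simp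
      calc M = (M^((2:ℝ)/α))^(α/2) := by rw [← Real.rpow_mul hMnn, he, Real.rpow_one]
      _ ≤ (p:ℝ)^(α/2) := Real.rpow_le_rpow (by positivity) hple (by positivity)
    calc Kr ≤ (8*C*L)^4 := hK4
    _ ≤ M * ((p:ℝ)^(α/8))^(4:ℕ) := hM4
    _ = M * (p:ℝ)^(α/2) := by rw [hp8]
    _ ≤ (p:ℝ)^(α/2) * (p:ℝ)^(α/2) := mul_le_mul_of_nonneg_right hMle (by positivity)
    _ = (p:ℝ)^α := by
        rw [← Real.rpow_add hppos]
        congr 1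
        ring
  · -- trivial case: S.card ≤ 1
    have h1 : S.card ≤ 1 := by omega
    calc (S.card:ℝ) ≤ 1 := by exact_mod_cast h1
    _ ≤ (p:ℝ)^α := hpα1
end
end
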